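/- arXiv:1411.4022 — 10 statements merged into one kernel-verified Lean document; each statement's English description precedes it below -/
import Mathlib

section
/- Let m, n ≥ 1. A polynomial f in the ring ℝ[ξ_{ij}, η_{ij} : 1 ≤ i ≤ m, 1 ≤ j ≤ n] belongs to R_n^m if and only if: for all i, j, k, the partial derivative ∂f/∂ξ_{ij} lies in the principal ideal generated by η_{ik}, and for all i, j, k with j ≠ k, the partial derivative ∂f/∂η_{ij} lies in the principal ideal generated by η_{ik}. -/
open MvPolynomial

variable {σ : Type*} [DecidableEq σ]

noncomputable def tau (v : σ) : MvPolynomial σ ℝ →ₐ[ℝ] MvPolynomial σ ℝ :=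
  aeval (Function.update X v 0)

lemma tau_X_self (v : σ) : tau v (X v) = 0 := by
  simp [tau]

lemma tau_X_ne (v u : σ) (h : u ≠ v) : tau v (X u) = X u := by
  simp [tau, Function.update_of_ne h]

lemma eval_tau (v : σ) (P : σ → ℝ) (f : MvPolynomial σ ℝ) :
    eval P (tau v f) = eval (Function.update P v 0) f := by
  have : (eval P).comp (tau v).toRingHom = eval (Function.update P v 0) := by
    apply MvPolynomial.ringHom_ext
    · intro a; simp [tau]
    · intro u
      by_cases h : u = v
      · subst h; simp [tau_X_self]
      · simp [tau_X_ne v u h, Function.update_of_ne h]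
  exact congrFun (congrArg DFunLike.coe this) f

lemma tau_sub_mem (v : σ) (f : MvPolynomial σ ℝ) :
    tau v f - f ∈ Ideal.span {(X v : MvPolynomial σ ℝ)} := by
  induction f using MvPolynomial.induction_on with
  | C a => simp
  | add p q hp hq =>
      have := Ideal.add_mem _ hp hq
      simpa [map_add, add_sub_add_comm] using this
  | mul_X p u hp =>
      by_cases h : u = v
      · rw [h, map_mul, tau_X_self, mul_zero, zero_sub]
        exact neg_mem (Ideal.mul_mem_left _ p
          (Ideal.subset_span (Set.mem_singleton _)))
      · rw [map_mul, tau_X_ne v u h]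
        have : tau v p * X u - p * X u = (tau v p - p) * X u := by ring
        rw [this]
        exact Ideal.mul_mem_right _ _ hp

lemma mem_span_iff_tau (v : σ) (f : MvPolynomial σ ℝ) :
    f ∈ Ideal.span {(X v : MvPolynomial σ ℝ)} ↔ tau v f = 0 := by
  constructor
  · intro h
    rw [Ideal.mem_span_singleton] at h
    obtain ⟨q, rfl⟩ := h
    rw [map_mul, tau_X_self, zero_mul]
  · intro h
    have := tau_sub_mem v f
    rw [h, zero_sub] at this
    simpa using neg_mem this

lemma pderiv_tau_self (v : σ) (f : MvPolynomial σ ℝ) :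
    pderiv v (tau v f) = 0 := by
  induction f using MvPolynomial.induction_on with
  | C a => simp
  | add p q hp hq => simp [map_add, hp, hq]
  | mul_X p u hp =>
      by_cases h : u = v
      · rw [h, map_mul, tau_X_self, mul_zero, map_zero]
      · rw [map_mul, tau_X_ne v u h, pderiv_mul, hp]
        simp [pderiv_X_of_ne h]

lemma pderiv_tau (v u : σ) (h : u ≠ v) (f : MvPolynomial σ ℝ) :
    pderiv u (tau v f) = tau v (pderiv u f) := by
  induction f using MvPolynomial.induction_on with
  | C a => simp
  | add p q hp hq => simp [map_add, hp, hq]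
  | mul_X p w hp =>
      by_cases hw : w = v
      · rw [hw, map_mul, tau_X_self, mul_zero, map_zero, pderiv_mul,
          pderiv_X_of_ne (Ne.symm h)]
        simp [tau_X_self]
      · rw [map_mul, tau_X_ne v w hw, pderiv_mul, pderiv_mul, map_add, map_mul,
          map_mul, hp, tau_X_ne v w hw]
        by_cases hwu : w = u
        · rw [hwu]; simp
        · simp [pderiv_X_of_ne hwu]

noncomputable def psi (w : σ) (P : σ → ℝ) : MvPolynomial σ ℝ →ₐ[ℝ] Polynomial ℝ :=
  aeval (fun u => if u = w then Polynomial.X else Polynomial.C (P u))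

lemma psi_eval (w : σ) (P : σ → ℝ) (t : ℝ) (f : MvPolynomial σ ℝ) :
    (psi w P f).eval t = eval (Function.update P w t) f := by
  have : (Polynomial.evalRingHom t).comp (psi w P).toRingHom
      = (eval (Function.update P w t) : MvPolynomial σ ℝ →+* ℝ) := by
    apply MvPolynomial.ringHom_ext
    · intro a; simp [psi]
    · intro u; by_cases h : u = w
      · rw [h]; simp [psi]
      · simp [psi, h, Function.update_of_ne h]
  exact congrFun (congrArg DFunLike.coe this) f

lemma psi_pderiv (w : σ) (P : σ → ℝ) (f : MvPolynomial σ ℝ) :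
    Polynomial.derivative (psi w P f) = psi w P (pderiv w f) := by
  induction f using MvPolynomial.induction_on with
  | C a => simp [psi]
  | add p q hp hq => simp [map_add, hp, hq]
  | mul_X p u hp =>
      rw [map_mul, pderiv_mul, Polynomial.derivative_mul, hp, map_add, map_mul, map_mul]
      by_cases h : u = w
      · rw [h]
        simp [psi]
      · have h1 : psi w P (X u) = Polynomial.C (P u) := by simp [psi, h]
        rw [h1, pderiv_X_of_ne h]
        simp

lemma eval_pderiv_of_const (w : σ) (P : σ → ℝ) (f : MvPolynomial σ ℝ)
    (h : ∀ t : ℝ, eval (Function.update P w t) f = eval P f) :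
    eval P (pderiv w f) = 0 := by
  have hc : psi w P f = Polynomial.C (eval P f) :=
    Polynomial.funext (fun t => by rw [psi_eval, h t, Polynomial.eval_C])
  have : (psi w P (pderiv w f)).eval (P w) = 0 := by
    rw [← psi_pderiv, hc]
    simp
  rwa [psi_eval, Function.update_eq_self] at this

lemma eval_update_of_pderiv_zero (w : σ) (P : σ → ℝ) (t : ℝ) (g : MvPolynomial σ ℝ)
    (h : pderiv w g = 0) : eval (Function.update P w t) g = eval P g := by
  have hd : Polynomial.derivative (psi w P g) = 0 := by rw [psi_pderiv, h, map_zero]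
  have hc := Polynomial.eq_C_of_derivative_eq_zero hd
  have h1 : eval (Function.update P w t) g = (psi w P g).coeff 0 := by
    rw [← psi_eval, hc]; simp
  have h2 : eval P g = (psi w P g).coeff 0 := by
    rw [← Function.update_eq_self w P, ← psi_eval, hc]; simp
  rw [h1, h2]

lemma eval_congr_of_pderiv_zero [Fintype σ] (g : MvPolynomial σ ℝ) (P Q : σ → ℝ)
    (h : ∀ u, P u ≠ Q u → pderiv u g = 0) : eval P g = eval Q g := by
  classical
  have key : ∀ (s : Finset σ) (P Q : σ → ℝ),
      (∀ u, P u ≠ Q u → u ∈ s ∧ pderiv u g = 0) → eval P g = eval Q g := by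
    intro s
    induction s using Finset.induction_on with
    | empty =>
        intro P Q h
        have : P = Q := funext fun u => by
          by_contra hc
          exact absurd ((h u hc).1) (Finset.notMem_empty u)
        rw [this]
    | insert a s hnotmem ih =>
        intro P Q h
        have step : eval P g = eval (Function.update P a (Q a)) g := by
          by_cases ha : P a = Q a
          · rw [← ha, Function.update_eq_self]
          · rw [eval_update_of_pderiv_zero a P (Q a) g ((h a ha).2)]
        rw [step]
        apply ih
        intro u hu
        have hua : u ≠ a := fun hc => by
          rw [hc, Function.update_self] at hu; exact hu rfl
        rw [Function.update_of_ne hua] at hu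
        rcases h u hu with ⟨hmem, hz⟩
        rcases Finset.mem_insert.mp hmem with h1 | h1
        · exact absurd h1 hua
        · exact ⟨h1, hz⟩
  exact key Finset.univ P Q fun u hu => ⟨Finset.mem_univ u, h u hu⟩


/-- A polynomial `f` in `ℝ[ξ_{ij}, η_{ij}]` belongs to `R_n^m` (i.e. for every
`i`, `f` takes equal values at any two points of `W_i` agreeing in all coordinates outside
row `i`) iff `∂f/∂ξ_{ij} ∈ (η_{ik})` for all `i, j, k` and `∂f/∂η_{ij} ∈ (η_{ik})` for all
`i, j, k` with `j ≠ k`.  Here `Sum.inl (i, j)` is the variable `ξ_{ij}` and `Sum.inr (i, j)`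
is the variable `η_{ij}`. -/
theorem stmt0 (m n : ℕ) (hm : 1 ≤ m) (hn : 1 ≤ n)
    (f : MvPolynomial ((Fin m × Fin n) ⊕ (Fin m × Fin n)) ℝ) :
    (∀ i : Fin m, ∀ P Q : ((Fin m × Fin n) ⊕ (Fin m × Fin n)) → ℝ,
        (∏ k : Fin n, P (Sum.inr (i, k))) = 0 →
        (∏ k : Fin n, Q (Sum.inr (i, k))) = 0 →
        (∀ i' : Fin m, ∀ j : Fin n, i' ≠ i →
          P (Sum.inl (i', j)) = Q (Sum.inl (i', j)) ∧
          P (Sum.inr (i', j)) = Q (Sum.inr (i', j))) →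
        eval P f = eval Q f)
    ↔ ((∀ i : Fin m, ∀ j k : Fin n,
          pderiv (Sum.inl (i, j)) f ∈
            Ideal.span {(X (Sum.inr (i, k)) :
              MvPolynomial ((Fin m × Fin n) ⊕ (Fin m × Fin n)) ℝ)}) ∧
        (∀ i : Fin m, ∀ j k : Fin n, j ≠ k →
          pderiv (Sum.inr (i, j)) f ∈
            Ideal.span {(X (Sum.inr (i, k)) :
              MvPolynomial ((Fin m × Fin n) ⊕ (Fin m × Fin n)) ℝ)})) := by
  constructor
  · intro H
    have key : ∀ (i : Fin m) (k : Fin n) (w : (Fin m × Fin n) ⊕ (Fin m × Fin n)),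
        w ≠ Sum.inr (i, k) →
        (∀ i' : Fin m, ∀ j' : Fin n, i' ≠ i →
          w ≠ Sum.inl (i', j') ∧ w ≠ Sum.inr (i', j')) →
        pderiv w f ∈ Ideal.span {(X (Sum.inr (i, k)) :
          MvPolynomial ((Fin m × Fin n) ⊕ (Fin m × Fin n)) ℝ)} := by
      intro i k w hwv hrow
      rw [mem_span_iff_tau]
      apply MvPolynomial.funext
      intro P
      rw [eval_tau, map_zero]
      apply eval_pderiv_of_const
      intro t
      apply H i
      · refine Finset.prod_eq_zero (Finset.mem_univ k) ?_
        rw [Function.update_of_ne (Ne.symm hwv), Function.update_self]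
      · exact Finset.prod_eq_zero (Finset.mem_univ k) (Function.update_self _ _ _)
      · intro i' j' hi'
        obtain ⟨hw1, hw2⟩ := hrow i' j' hi'
        exact ⟨Function.update_of_ne (Ne.symm hw1) _ _,
               Function.update_of_ne (Ne.symm hw2) _ _⟩
    constructor
    · intro i j k
      refine key i k (Sum.inl (i, j)) (by simp) ?_
      intro i' j' hi'
      refine ⟨?_, by simp⟩
      simp only [ne_eq, Sum.inl.injEq, Prod.mk.injEq, not_and]
      intro h _
      exact hi' h.symm
    · intro i j k hjk
      refine key i k (Sum.inr (i, j)) ?_ ?_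
      · simp only [ne_eq, Sum.inr.injEq, Prod.mk.injEq, not_and]
        intro _ h
        exact hjk h
      · intro i' j' hi'
        refine ⟨by simp, ?_⟩
        simp only [ne_eq, Sum.inr.injEq, Prod.mk.injEq, not_and]
        intro h _
        exact hi' h.symm
  · rintro ⟨h1, h2⟩ i P Q hP hQ hagree
    obtain ⟨j₀, -, hj₀⟩ := Finset.prod_eq_zero_iff.mp hP
    obtain ⟨j₁, -, hj₁⟩ := Finset.prod_eq_zero_iff.mp hQ
    have pd : ∀ (jz : Fin n) (w : (Fin m × Fin n) ⊕ (Fin m × Fin n)),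
        (∃ j', w = Sum.inl (i, j') ∨ w = Sum.inr (i, j')) →
        pderiv w (tau (Sum.inr (i, jz)) f) = 0 := by
      intro jz w hw
      by_cases hwz : w = Sum.inr (i, jz)
      · rw [hwz]; exact pderiv_tau_self _ f
      · rw [pderiv_tau _ _ hwz]
        rcases hw with ⟨j', hj | hj⟩
        · rw [hj]
          rw [hj] at hwz
          exact (mem_span_iff_tau _ _).mp (h1 i j' jz)
        · rw [hj]
          rw [hj] at hwz
          have hne : j' ≠ jz := fun hc => hwz (by rw [hc])
          exact (mem_span_iff_tau _ _).mp (h2 i j' jz hne)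
    have congrstep : ∀ (jz : Fin n) (A B : ((Fin m × Fin n) ⊕ (Fin m × Fin n)) → ℝ),
        (∀ i' : Fin m, ∀ j' : Fin n, i' ≠ i →
          A (Sum.inl (i', j')) = B (Sum.inl (i', j')) ∧
          A (Sum.inr (i', j')) = B (Sum.inr (i', j'))) →
        eval A (tau (Sum.inr (i, jz)) f) = eval B (tau (Sum.inr (i, jz)) f) := by
      intro jz A B hAB
      apply eval_congr_of_pderiv_zero
      intro u hu
      apply pd jz
      rcases u with (⟨i', j'⟩ | ⟨i', j'⟩)
      · by_cases hi : i' = i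
        · exact ⟨j', Or.inl (by rw [hi])⟩
        · exact absurd ((hAB i' j' hi).1) hu
      · by_cases hi : i' = i
        · exact ⟨j', Or.inr (by rw [hi])⟩
        · exact absurd ((hAB i' j' hi).2) hu
    have evtau : ∀ (jz : Fin n) (A : ((Fin m × Fin n) ⊕ (Fin m × Fin n)) → ℝ),
        A (Sum.inr (i, jz)) = 0 → eval A (tau (Sum.inr (i, jz)) f) = eval A f := by
      intro jz A hA
      rw [eval_tau]
      have hup : Function.update A (Sum.inr (i, jz)) (0 : ℝ) = A := by
        rw [← hA]
        exact Function.update_eq_self _ _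
      rw [hup]
    set Q' := Function.update Q (Sum.inr (i, j₀)) 0 with hQ'def
    have hQ'v₀ : Q' (Sum.inr (i, j₀)) = 0 := Function.update_self _ _ _
    have hQ'v₁ : Q' (Sum.inr (i, j₁)) = 0 := by
      by_cases h : (Sum.inr (i, j₁) : (Fin m × Fin n) ⊕ (Fin m × Fin n)) = Sum.inr (i, j₀)
      · rw [h]; exact Function.update_self _ _ _
      · rw [hQ'def, Function.update_of_ne h]; exact hj₁
    have agreePQ' : ∀ i' : Fin m, ∀ j' : Fin n, i' ≠ i →
        P (Sum.inl (i', j')) = Q' (Sum.inl (i', j')) ∧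
        P (Sum.inr (i', j')) = Q' (Sum.inr (i', j')) := by
      intro i' j' hi'
      have e1 : Q' (Sum.inl (i', j')) = Q (Sum.inl (i', j')) :=
        Function.update_of_ne (by simp) _ _
      have e2 : Q' (Sum.inr (i', j')) = Q (Sum.inr (i', j')) := by
        refine Function.update_of_ne ?_ _ _
        simp only [ne_eq, Sum.inr.injEq, Prod.mk.injEq, not_and]
        intro h _
        exact hi' h
      rw [e1, e2]
      exact hagree i' j' hi'
    have agreeQ'Q : ∀ i' : Fin m, ∀ j' : Fin n, i' ≠ i →
        Q' (Sum.inl (i', j')) = Q (Sum.inl (i', j')) ∧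
        Q' (Sum.inr (i', j')) = Q (Sum.inr (i', j')) := by
      intro i' j' hi'
      refine ⟨Function.update_of_ne (by simp) _ _, Function.update_of_ne ?_ _ _⟩
      simp only [ne_eq, Sum.inr.injEq, Prod.mk.injEq, not_and]
      intro h _
      exact hi' h
    calc eval P f = eval P (tau (Sum.inr (i, j₀)) f) := (evtau j₀ P hj₀).symm
      _ = eval Q' (tau (Sum.inr (i, j₀)) f) := congrstep j₀ P Q' agreePQ'
      _ = eval Q' f := evtau j₀ Q' hQ'v₀
      _ = eval Q' (tau (Sum.inr (i, j₁)) f) := (evtau j₁ Q' hQ'v₁).symm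
      _ = eval Q (tau (Sum.inr (i, j₁)) f) := congrstep j₁ Q' Q agreeQ'Q
      _ = eval Q f := evtau j₁ Q hj₁
end

section
/- Let m, n ≥ 1. A polynomial f in ℝ[ξ_{ij}, η_{ij} : 1 ≤ i ≤ m, 1 ≤ j ≤ n] belongs to R_n^m if and only if every monomial ∏_{i,j} η_{ij}^{A_{ij}} ξ_{ij}^{B_{ij}} occurring in f with nonzero coefficient satisfies: for every i, if there exists j with A_{ij} > 0 or B_{ij} > 0, then A_{ik} > 0 for all k. Consequently, the set of such monomials forms an ℝ-vector space basis of R_n^m. -/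
open MvPolynomial

variable {σ : Type*} [DecidableEq σ]

/-- Evaluating an `aeval`-substituted polynomial. -/
lemma eval_aeval' (P : σ → ℝ) (s : σ → MvPolynomial σ ℝ) (h : MvPolynomial σ ℝ) :
    eval P (aeval s h) = eval (fun w => eval P (s w)) h := by
  induction h using MvPolynomial.induction_on with
  | C a => simp
  | add p q hp hq => simp only [map_add, hp, hq]
  | mul_X p v hp => simp only [map_mul, aeval_X, eval_mul, eval_X, hp]

/-- Coefficients after substituting `v := 0`. -/
lemma coeff_subst_zero (v : σ) (h : MvPolynomial σ ℝ) (d : σ →₀ ℕ) :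
    coeff d (aeval (fun w => if w = v then (0 : MvPolynomial σ ℝ) else X w) h)
      = if d v = 0 then coeff d h else 0 := by
  induction h using MvPolynomial.induction_on' with
  | monomial u a =>
    rw [aeval_monomial]
    by_cases hu : u v = 0
    · have hv : v ∉ u.support := by simp [Finsupp.mem_support_iff, hu]
      have hprod : (u.prod fun w e => (if w = v then (0 : MvPolynomial σ ℝ) else X w) ^ e)
          = u.prod fun w e => (X w : MvPolynomial σ ℝ) ^ e := by
        apply Finsupp.prod_congr
        intro w hw
        rw [if_neg]
        rintro rfl
        exact hv hw
      rw [hprod, MvPolynomial.algebraMap_eq, ← monomial_eq]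
      by_cases hd : d v = 0
      · rw [if_pos hd]
      · rw [if_neg hd, coeff_monomial, if_neg]
        rintro rfl
        exact hd hu
    · have hzero : (u.prod fun w e => (if w = v then (0 : MvPolynomial σ ℝ) else X w) ^ e) = 0 := by
        apply Finset.prod_eq_zero (Finsupp.mem_support_iff.mpr hu)
        simp [zero_pow hu]
      rw [hzero, mul_zero, coeff_zero]
      by_cases hd : d v = 0
      · rw [if_pos hd, coeff_monomial, if_neg]
        rintro rfl
        rw [hd] at hu
        exact hu rfl
      · rw [if_neg hd]
  | add p q hp hq =>
    rw [map_add, coeff_add, hp, hq, coeff_add]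
    split_ifs <;> simp

/-- If evaluation of `h` does not depend on the variable `v`, then `v` occurs in no monomial. -/
lemma not_mem_support_of_indep (v : σ) (h : MvPolynomial σ ℝ)
    (hind : ∀ (P : σ → ℝ) (t : ℝ), eval (Function.update P v t) h = eval P h) :
    ∀ d ∈ h.support, d v = 0 := by
  have key : aeval (fun w => if w = v then (0 : MvPolynomial σ ℝ) else X w) h = h := by
    apply MvPolynomial.funext
    intro P
    rw [eval_aeval']
    have hfun : (fun w => eval P (if w = v then (0 : MvPolynomial σ ℝ) else X w))
        = Function.update P v 0 := by
      funext w
      by_cases hw : w = v <;> simp [Function.update_apply, hw]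
    rw [hfun, hind P 0]
  intro d hd
  by_contra hdv
  have hc := coeff_subst_zero v h d
  rw [key, if_neg hdv] at hc
  exact (MvPolynomial.mem_support_iff.mp hd) hc
/-- A polynomial `f ∈ ℝ[ξ_{ij}, η_{ij}]` belongs to `R_n^m` iff every monomial
`∏ η_{ij}^{A_{ij}} ξ_{ij}^{B_{ij}}` occurring in `f` with nonzero coefficient satisfies:
for every `i`, if some `A_{ij} > 0` or `B_{ij} > 0`, then `A_{ik} > 0` for all `k`.
Consequently these monomials form an ℝ-basis of `R_n^m`: they are linearly independent and
their span is exactly `R_n^m`.  Here `Sum.inl (i, j)` is the variable `ξ_{ij}` and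
`Sum.inr (i, j)` is the variable `η_{ij}`. -/
theorem stmt1 (m n : ℕ) (hm : 1 ≤ m) (hn : 1 ≤ n) :
    (∀ f : MvPolynomial ((Fin m × Fin n) ⊕ (Fin m × Fin n)) ℝ,
      (∀ i : Fin m, ∀ P Q : ((Fin m × Fin n) ⊕ (Fin m × Fin n)) → ℝ,
        (∏ k : Fin n, P (Sum.inr (i, k))) = 0 →
        (∏ k : Fin n, Q (Sum.inr (i, k))) = 0 →
        (∀ i' : Fin m, ∀ j : Fin n, i' ≠ i →
          P (Sum.inl (i', j)) = Q (Sum.inl (i', j)) ∧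
          P (Sum.inr (i', j)) = Q (Sum.inr (i', j))) →
        eval P f = eval Q f)
      ↔ (∀ d ∈ f.support, ∀ i : Fin m,
          (∃ j : Fin n, 0 < d (Sum.inr (i, j)) ∨ 0 < d (Sum.inl (i, j))) →
          ∀ k : Fin n, 0 < d (Sum.inr (i, k)))) ∧
    LinearIndependent ℝ
      (fun d : {d : ((Fin m × Fin n) ⊕ (Fin m × Fin n)) →₀ ℕ //
          ∀ i : Fin m,
            (∃ j : Fin n, 0 < d (Sum.inr (i, j)) ∨ 0 < d (Sum.inl (i, j))) →
            ∀ k : Fin n, 0 < d (Sum.inr (i, k))} =>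
        (monomial d.1 (1 : ℝ) :
          MvPolynomial ((Fin m × Fin n) ⊕ (Fin m × Fin n)) ℝ)) ∧
    (Submodule.span ℝ
        {g : MvPolynomial ((Fin m × Fin n) ⊕ (Fin m × Fin n)) ℝ |
          ∃ d : ((Fin m × Fin n) ⊕ (Fin m × Fin n)) →₀ ℕ,
            (∀ i : Fin m,
              (∃ j : Fin n, 0 < d (Sum.inr (i, j)) ∨ 0 < d (Sum.inl (i, j))) →
              ∀ k : Fin n, 0 < d (Sum.inr (i, k))) ∧
            g = monomial d (1 : ℝ)} : Set _) =
      {f : MvPolynomial ((Fin m × Fin n) ⊕ (Fin m × Fin n)) ℝ |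
        ∀ i : Fin m, ∀ P Q : ((Fin m × Fin n) ⊕ (Fin m × Fin n)) → ℝ,
          (∏ k : Fin n, P (Sum.inr (i, k))) = 0 →
          (∏ k : Fin n, Q (Sum.inr (i, k))) = 0 →
          (∀ i' : Fin m, ∀ j : Fin n, i' ≠ i →
            P (Sum.inl (i', j)) = Q (Sum.inl (i', j)) ∧
            P (Sum.inr (i', j)) = Q (Sum.inr (i', j))) →
          eval P f = eval Q f} := by
  have key : ∀ f : MvPolynomial ((Fin m × Fin n) ⊕ (Fin m × Fin n)) ℝ,
      (∀ i : Fin m, ∀ P Q : ((Fin m × Fin n) ⊕ (Fin m × Fin n)) → ℝ,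
        (∏ k : Fin n, P (Sum.inr (i, k))) = 0 →
        (∏ k : Fin n, Q (Sum.inr (i, k))) = 0 →
        (∀ i' : Fin m, ∀ j : Fin n, i' ≠ i →
          P (Sum.inl (i', j)) = Q (Sum.inl (i', j)) ∧
          P (Sum.inr (i', j)) = Q (Sum.inr (i', j))) →
        eval P f = eval Q f)
      ↔ (∀ d ∈ f.support, ∀ i : Fin m,
          (∃ j : Fin n, 0 < d (Sum.inr (i, j)) ∨ 0 < d (Sum.inl (i, j))) →
          ∀ k : Fin n, 0 < d (Sum.inr (i, k))) := by
    intro f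
    constructor
    · -- analytic → combinatorial
      intro hf d hd i hij k
      obtain ⟨j, hj⟩ := hij
      by_contra hk
      have hk0 : d (Sum.inr (i, k)) = 0 := Nat.eq_zero_of_not_pos hk
      set v0 : (Fin m × Fin n) ⊕ (Fin m × Fin n) := Sum.inr (i, k) with hv0
      set g := aeval
        (fun w => if w = v0 then (0 : MvPolynomial ((Fin m × Fin n) ⊕ (Fin m × Fin n)) ℝ)
          else X w) f with hg
      -- evaluating g is evaluating f with coordinate v0 set to 0
      have e1 : ∀ Q : ((Fin m × Fin n) ⊕ (Fin m × Fin n)) → ℝ,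
          eval Q g = eval (Function.update Q v0 0) f := by
        intro Q
        rw [hg, eval_aeval']
        have hfun : (fun w => eval Q
            (if w = v0 then (0 : MvPolynomial ((Fin m × Fin n) ⊕ (Fin m × Fin n)) ℝ)
              else X w)) = Function.update Q v0 0 := by
          funext w
          by_cases hw : w = v0 <;> simp [Function.update_apply, hw]
        rw [hfun]
      -- g is independent of every variable of row i
      have hgind : ∀ v : (Fin m × Fin n) ⊕ (Fin m × Fin n),
          (∃ j' : Fin n, v = Sum.inl (i, j') ∨ v = Sum.inr (i, j')) →
          ∀ (P : ((Fin m × Fin n) ⊕ (Fin m × Fin n)) → ℝ) (t : ℝ),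
            eval (Function.update P v t) g = eval P g := by
        intro v hv P t
        rw [e1, e1]
        apply hf i
        · apply Finset.prod_eq_zero (Finset.mem_univ k)
          exact Function.update_self v0 0 _
        · apply Finset.prod_eq_zero (Finset.mem_univ k)
          exact Function.update_self v0 0 _
        · intro i' j' hne
          obtain ⟨j'', hv'⟩ := hv
          have h1 : Sum.inl (i', j') ≠ v0 := by simp [hv0]
          have h2 : (Sum.inr (i', j') : (Fin m × Fin n) ⊕ (Fin m × Fin n)) ≠ v0 := by
            simp only [hv0, ne_eq, Sum.inr.injEq, Prod.mk.injEq, not_and]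
            intro h; exact absurd h hne
          have h3 : Sum.inl (i', j') ≠ v := by
            rcases hv' with rfl | rfl
            · simp only [ne_eq, Sum.inl.injEq, Prod.mk.injEq, not_and]
              intro h; exact absurd h hne
            · simp
          have h4 : (Sum.inr (i', j') : (Fin m × Fin n) ⊕ (Fin m × Fin n)) ≠ v := by
            rcases hv' with rfl | rfl
            · simp
            · simp only [ne_eq, Sum.inr.injEq, Prod.mk.injEq, not_and]
              intro h; exact absurd h hne
          constructor
          · rw [Function.update_of_ne h1, Function.update_of_ne h1,
              Function.update_of_ne h3]
          · rw [Function.update_of_ne h2, Function.update_of_ne h2,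
              Function.update_of_ne h4]
      -- d is in the support of g
      have hdg : d ∈ g.support := by
        rw [MvPolynomial.mem_support_iff, hg, coeff_subst_zero, if_pos hk0]
        exact MvPolynomial.mem_support_iff.mp hd
      -- contradiction with the occurring row-i variable
      rcases hj with hj | hj
      · have := not_mem_support_of_indep (Sum.inr (i, j)) g
          (hgind _ ⟨j, Or.inr rfl⟩) d hdg
        omega
      · have := not_mem_support_of_indep (Sum.inl (i, j)) g
          (hgind _ ⟨j, Or.inl rfl⟩) d hdg
        omega
    · -- combinatorial → analytic
      intro hcomb i P Q hP hQ hPQ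
      rw [eval_eq, eval_eq]
      apply Finset.sum_congr rfl
      intro d hd
      by_cases hrow : ∃ j : Fin n, 0 < d (Sum.inr (i, j)) ∨ 0 < d (Sum.inl (i, j))
      · have hall := hcomb d hd i hrow
        obtain ⟨k0, -, hk0⟩ := Finset.prod_eq_zero_iff.mp hP
        obtain ⟨k1, -, hk1⟩ := Finset.prod_eq_zero_iff.mp hQ
        have m0 : (Sum.inr (i, k0) : (Fin m × Fin n) ⊕ (Fin m × Fin n)) ∈ d.support :=
          Finsupp.mem_support_iff.mpr (Nat.pos_iff_ne_zero.mp (hall k0))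
        have m1 : (Sum.inr (i, k1) : (Fin m × Fin n) ⊕ (Fin m × Fin n)) ∈ d.support :=
          Finsupp.mem_support_iff.mpr (Nat.pos_iff_ne_zero.mp (hall k1))
        rw [Finset.prod_eq_zero m0 (by rw [hk0]; exact zero_pow (Nat.pos_iff_ne_zero.mp (hall k0))),
          Finset.prod_eq_zero m1 (by rw [hk1]; exact zero_pow (Nat.pos_iff_ne_zero.mp (hall k1)))]
      · push_neg at hrow
        congr 1
        apply Finset.prod_congr rfl
        intro w hw
        have hwne : d w ≠ 0 := Finsupp.mem_support_iff.mp hw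
        rcases w with ⟨i', j'⟩ | ⟨i', j'⟩
        · have hne : i' ≠ i := by
            rintro rfl
            exact hwne (Nat.le_zero.mp (hrow j').2)
          rw [(hPQ i' j' hne).1]
        · have hne : i' ≠ i := by
            rintro rfl
            exact hwne (Nat.le_zero.mp (hrow j').1)
          rw [(hPQ i' j' hne).2]
  refine ⟨key, ?_, ?_⟩
  · have h2 := ((MvPolynomial.basisMonomials
      ((Fin m × Fin n) ⊕ (Fin m × Fin n)) ℝ).linearIndependent).comp
      (Subtype.val : {d : ((Fin m × Fin n) ⊕ (Fin m × Fin n)) →₀ ℕ //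
          ∀ i : Fin m,
            (∃ j : Fin n, 0 < d (Sum.inr (i, j)) ∨ 0 < d (Sum.inl (i, j))) →
            ∀ k : Fin n, 0 < d (Sum.inr (i, k))} → _)
      Subtype.val_injective
    simp only [coe_basisMonomials] at h2; exact h2
  · -- span equality
    set D : Set (((Fin m × Fin n) ⊕ (Fin m × Fin n)) →₀ ℕ) :=
      {d | ∀ i : Fin m,
        (∃ j : Fin n, 0 < d (Sum.inr (i, j)) ∨ 0 < d (Sum.inl (i, j))) →
        ∀ k : Fin n, 0 < d (Sum.inr (i, k))} with hD
    set S : Submodule ℝ (MvPolynomial ((Fin m × Fin n) ⊕ (Fin m × Fin n)) ℝ) :=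
      { carrier := {f | ∀ i : Fin m, ∀ P Q : ((Fin m × Fin n) ⊕ (Fin m × Fin n)) → ℝ,
          (∏ k : Fin n, P (Sum.inr (i, k))) = 0 →
          (∏ k : Fin n, Q (Sum.inr (i, k))) = 0 →
          (∀ i' : Fin m, ∀ j : Fin n, i' ≠ i →
            P (Sum.inl (i', j)) = Q (Sum.inl (i', j)) ∧
            P (Sum.inr (i', j)) = Q (Sum.inr (i', j))) →
          eval P f = eval Q f}
        add_mem' := by
          intro a b ha hb i P Q hP hQ hPQ
          simp only [map_add]
          rw [ha i P Q hP hQ hPQ, hb i P Q hP hQ hPQ]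
        zero_mem' := by
          intro i P Q _ _ _
          simp
        smul_mem' := by
          intro c x hx i P Q hP hQ hPQ
          rw [smul_eq_C_mul, eval_mul, eval_mul, eval_C, eval_C, hx i P Q hP hQ hPQ] } with hS
    apply Set.Subset.antisymm
    · have hle : Submodule.span ℝ
          {g : MvPolynomial ((Fin m × Fin n) ⊕ (Fin m × Fin n)) ℝ |
            ∃ d, (∀ i : Fin m,
              (∃ j : Fin n, 0 < d (Sum.inr (i, j)) ∨ 0 < d (Sum.inl (i, j))) →
              ∀ k : Fin n, 0 < d (Sum.inr (i, k))) ∧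
            g = monomial d (1 : ℝ)} ≤ S := by
        rw [Submodule.span_le]
        rintro g ⟨d, hdcond, rfl⟩
        show ∀ _, _
        apply (key (monomial d 1)).mpr
        intro d' hd'
        have : d' = d := by
          rw [MvPolynomial.support_monomial, if_neg (one_ne_zero)] at hd'
          exact Finset.mem_singleton.mp hd'
        rw [this]
        exact hdcond
      exact hle
    · intro f hf
      have hc := (key f).mp hf
      have hrep : f = ∑ d ∈ f.support, coeff d f • monomial d (1 : ℝ) := by
        conv_lhs => rw [← MvPolynomial.support_sum_monomial_coeff f]
        apply Finset.sum_congr rfl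
        intro d _
        rw [MvPolynomial.smul_monomial, smul_eq_mul, mul_one]
      rw [SetLike.mem_coe, hrep]
      apply Submodule.sum_mem
      intro d hd
      exact Submodule.smul_mem _ _ (Submodule.subset_span ⟨d, hc d hd, rfl⟩)
end

section
/- Let n ≥ 1. In the commutative ring of all real-valued functions on the set of finite multisets of pairs (x, y) ∈ ℝ^n × ℝ^n (with pointwise operations), the family of functions M ↦ p_{a,b}(M), indexed by pairs (a, b) with a ∈ ℕ₊^n and b ∈ ℕ^n, is algebraically independent over ℝ. -/
open MvPolynomial


/-- `p_{a,b}(M) = Σ_{(x,y) ∈ M} ∏_j (y_j - x_j)^{a_j} (y_j + x_j)^{b_j}` for a finite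
multiset `M` of pairs `(x, y) ∈ ℝ^n × ℝ^n`. -/
noncomputable def pInv (n : ℕ) (a b : Fin n → ℕ)
    (M : Multiset ((Fin n → ℝ) × (Fin n → ℝ))) : ℝ :=
  (M.map (fun xy => ∏ j, (xy.2 j - xy.1 j) ^ (a j) * (xy.2 j + xy.1 j) ^ (b j))).sum

namespace Stmt3Aux

variable {σ : Type*}

/-- Translation of a multivariate polynomial: `P(X) ↦ P(X + c)`. -/
noncomputable def tr (c : σ → ℝ) : MvPolynomial σ ℝ →ₐ[ℝ] MvPolynomial σ ℝ :=
  aeval (fun i => X i + C (c i))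

lemma tr_C (c : σ → ℝ) (r : ℝ) : tr c (C r) = C r := by
  simp [tr, algebraMap_eq]

lemma tr_X (c : σ → ℝ) (i : σ) : tr c (X i) = X i + C (c i) := by
  simp [tr]

lemma eval_tr (c y : σ → ℝ) (P : MvPolynomial σ ℝ) :
    eval y (tr c P) = eval (fun i => y i + c i) P := by
  induction P using MvPolynomial.induction_on with
  | C r => simp [tr_C]
  | add p q hp hq => simp [map_add, hp, hq]
  | mul_X p i hp => simp [map_mul, tr_X, hp]

lemma tr_tr (c c' : σ → ℝ) (P : MvPolynomial σ ℝ) :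
    tr c (tr c' P) = tr (fun i => c i + c' i) P := by
  induction P using MvPolynomial.induction_on with
  | C r => simp [tr_C]
  | add p q hp hq => simp [map_add, hp, hq]
  | mul_X p i hp => simp [map_mul, tr_X, tr_C, hp, map_add, add_assoc]

lemma tr_zero (P : MvPolynomial σ ℝ) : tr (fun _ => (0:ℝ)) P = P := by
  have h : tr (fun _ => (0:ℝ)) P = aeval X P := by
    unfold tr
    simp
  rw [h, aeval_X_left_apply]

lemma deg_binom (j : σ) (a : ℝ) : ∀ k : ℕ, k ≠ 0 →
    ∃ R : MvPolynomial σ ℝ, (X j + C a) ^ k = X j ^ k + R ∧ R.totalDegree < k := by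
  intro k
  induction k with
  | zero => intro h; exact absurd rfl h
  | succ k ih =>
    intro _
    rcases Nat.eq_zero_or_pos k with hk | hk
    · subst hk
      exact ⟨C a, by ring, by simp⟩
    · obtain ⟨R, hR, hdeg⟩ := ih hk.ne'
      refine ⟨X j ^ k * C a + R * X j + R * C a, by rw [pow_succ, hR]; ring, ?_⟩
      have hXk : (X j ^ k : MvPolynomial σ ℝ).totalDegree ≤ k := by
        simpa using (totalDegree_pow (X j : MvPolynomial σ ℝ) k).trans (by simp)
      have h1 : (X j ^ k * C a : MvPolynomial σ ℝ).totalDegree < k + 1 := by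
        have := totalDegree_mul (X j ^ k : MvPolynomial σ ℝ) (C a)
        simp only [totalDegree_C, add_zero] at this
        omega
      have h2 : (R * X j).totalDegree < k + 1 := by
        have := totalDegree_mul R (X j : MvPolynomial σ ℝ)
        have hX : (X j : MvPolynomial σ ℝ).totalDegree ≤ 1 := by simp [totalDegree_X]
        omega
      have h3 : (R * C a).totalDegree < k + 1 := by
        have := totalDegree_mul R (C a : MvPolynomial σ ℝ)
        simp only [totalDegree_C, add_zero] at this
        omega
      exact (totalDegree_add _ _).trans_lt (max_lt ((totalDegree_add _ _).trans_lt
        (max_lt h1 h2)) h3)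

lemma deg_tr_monomial (c : σ → ℝ) (u : σ →₀ ℕ) :
    ∃ R : MvPolynomial σ ℝ, tr c (monomial u 1) = monomial u 1 + R ∧
      (R = 0 ∨ R.totalDegree < u.sum fun _ e => e) := by
  induction u using Finsupp.induction with
  | zero =>
    refine ⟨0, ?_, Or.inl rfl⟩
    simp [monomial_zero', tr_C]
  | single_add j k u' hj hk ih =>
    obtain ⟨R', hR', hd'⟩ := ih
    obtain ⟨Rb, hRb, hdb⟩ := deg_binom j (c j) k hk
    set s' := u'.sum fun _ e => e with hs'
    have husum : ((Finsupp.single j k + u').sum fun _ e => e) = k + s' := by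
      rw [Finsupp.sum_add_index' (fun _ => rfl) (fun _ _ _ => rfl),
        Finsupp.sum_single_index rfl]
    refine ⟨X j ^ k * R' + Rb * monomial u' 1 + Rb * R', ?_, Or.inr ?_⟩
    · rw [monomial_single_add, map_mul]
      have : tr c (X j ^ k) = X j ^ k + Rb := by
        rw [map_pow, tr_X, hRb]
      rw [this, hR']
      ring
    · rw [husum]
      have hkpos : 0 < k := Nat.pos_of_ne_zero hk
      have hXk : (X j ^ k : MvPolynomial σ ℝ).totalDegree ≤ k := by
        simpa using (totalDegree_pow (X j : MvPolynomial σ ℝ) k).trans (by simp)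
      have hmon : (monomial u' (1:ℝ)).totalDegree ≤ s' := by
        rw [totalDegree_monomial u' (one_ne_zero)]
      have h1 : (X j ^ k * R').totalDegree < k + s' := by
        rcases hd' with h | h
        · simp [h, hkpos]
        · have := totalDegree_mul (X j ^ k : MvPolynomial σ ℝ) R'
          omega
      have h2 : (Rb * monomial u' 1).totalDegree < k + s' := by
        have := totalDegree_mul Rb (monomial u' (1:ℝ))
        omega
      have h3 : (Rb * R').totalDegree < k + s' := by
        rcases hd' with h | h
        · simp [h, hkpos]
        · have := totalDegree_mul Rb R'
          omega
      exact (totalDegree_add _ _).trans_lt (max_lt ((totalDegree_add _ _).trans_lt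
        (max_lt h1 h2)) h3)

lemma deg_tr_sub_lt (c : σ → ℝ) (P : MvPolynomial σ ℝ) (hP : P.totalDegree ≠ 0) :
    (tr c P - P).totalDegree < P.totalDegree := by
  have hpos : 0 < P.totalDegree := Nat.pos_of_ne_zero hP
  have hrepr : tr c P - P
      = ∑ u ∈ P.support, C (coeff u P) * (tr c (monomial u 1) - monomial u 1) := by
    conv_lhs => rw [← support_sum_monomial_coeff P]
    rw [map_sum, ← Finset.sum_sub_distrib]
    refine Finset.sum_congr rfl fun u hu => ?_
    rw [show monomial u (coeff u P) = C (coeff u P) * monomial u 1 by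
      rw [C_mul_monomial, mul_one], map_mul, tr_C, mul_sub]
  rw [hrepr]
  refine (totalDegree_finset_sum _ _).trans_lt ?_
  rw [Finset.sup_lt_iff (by simpa using hpos)]
  intro u hu
  obtain ⟨R, hR, hd⟩ := deg_tr_monomial c u
  have hsub : tr c (monomial u 1) - monomial u 1 = R := by rw [hR]; ring
  rw [hsub]
  rcases hd with h | h
  · simp [h, hpos]
  · have hle := totalDegree_mul (C (coeff u P)) R
    have hus : (u.sum fun _ e => e) ≤ P.totalDegree := le_totalDegree hu
    simp only [totalDegree_C, zero_add] at hle
    omega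

lemma tr_smul_eq (P : MvPolynomial σ ℝ) (v : σ → ℝ)
    (hv : ∀ k : ℕ, tr (fun i => (k : ℝ) * v i) P = P) (t : ℝ) :
    tr (fun i => t * v i) P = P := by
  set g : σ → MvPolynomial σ (Polynomial ℝ) :=
    fun i => X i + C (Polynomial.C (v i) * Polynomial.X) with hg
  set Q : MvPolynomial σ (Polynomial ℝ) := aeval g (MvPolynomial.map Polynomial.C P) with hQ
  have key : ∀ r : ℝ,
      MvPolynomial.map (Polynomial.evalRingHom r) Q = tr (fun i => r * v i) P := by
    intro r
    have hhom : (MvPolynomial.map (Polynomial.evalRingHom r)).comp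
        (((aeval g : MvPolynomial σ (Polynomial ℝ) →ₐ[Polynomial ℝ]
            MvPolynomial σ (Polynomial ℝ)).toRingHom).comp
          (MvPolynomial.map (Polynomial.C : ℝ →+* Polynomial ℝ)))
        = (tr (fun i => r * v i)).toRingHom := by
      apply MvPolynomial.ringHom_ext
      · intro r0
        simp only [RingHom.comp_apply, AlgHom.toRingHom_eq_coe, RingHom.coe_coe,
          MvPolynomial.map_C, aeval_C, algebraMap_eq, tr_C,
          Polynomial.coe_evalRingHom, Polynomial.eval_C]
      · intro i
        simp only [hg, RingHom.comp_apply, AlgHom.toRingHom_eq_coe, RingHom.coe_coe,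
          MvPolynomial.map_X, aeval_X, map_add, MvPolynomial.map_C, tr_X,
          Polynomial.coe_evalRingHom, Polynomial.eval_mul, Polynomial.eval_C,
          Polynomial.eval_X]
        rw [mul_comm]
    have h2 := RingHom.congr_fun hhom P
    simp only [RingHom.coe_comp, Function.comp_apply, AlgHom.toRingHom_eq_coe,
      AlgHom.coe_toRingHom, RingHom.coe_coe] at h2
    rw [hQ]
    exact h2
  have hQP : Q = MvPolynomial.map (Polynomial.C : ℝ →+* Polynomial ℝ) P := by
    apply MvPolynomial.ext
    intro u
    apply Polynomial.eq_of_infinite_eval_eq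
    apply Set.infinite_of_injective_forall_mem (f := (Nat.cast : ℕ → ℝ))
      Nat.cast_injective
    intro k
    show Polynomial.eval (k:ℝ) (coeff u Q) = Polynomial.eval (k:ℝ) (coeff u _)
    have hk := key (k : ℝ)
    rw [hv k] at hk
    calc Polynomial.eval (k:ℝ) (coeff u Q)
        = coeff u (MvPolynomial.map (Polynomial.evalRingHom (k:ℝ)) Q) := by
          rw [coeff_map]; rfl
      _ = coeff u P := by rw [hk]
      _ = Polynomial.eval (k:ℝ) (coeff u (MvPolynomial.map
            (Polynomial.C : ℝ →+* Polynomial ℝ) P)) := by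
          rw [coeff_map]; simp
  have hfin := key t
  rw [hQP, MvPolynomial.map_map] at hfin
  have hid : (Polynomial.evalRingHom t).comp (Polynomial.C : ℝ →+* Polynomial ℝ)
      = RingHom.id ℝ := by
    ext r; simp
  rw [hid, MvPolynomial.map_id] at hfin
  exact hfin.symm

lemma span_curve_top [Fintype σ] (d : σ → ℕ) (hd : Function.Injective d) :
    Submodule.span ℝ {w : σ → ℝ | ∃ z : ℝ, w = fun i => z ^ d i} = ⊤ := by
  classical
  by_contra hne
  obtain ⟨φ, hφ0, hφ⟩ := Submodule.exists_dual_map_eq_bot_of_lt_top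
    (lt_top_iff_ne_top.mpr hne) inferInstance
  have hvanish : ∀ z : ℝ, φ (fun i => z ^ d i) = 0 := by
    intro z
    have hmem : (fun i => z ^ d i)
        ∈ Submodule.span ℝ {w : σ → ℝ | ∃ z : ℝ, w = fun i => z ^ d i} :=
      Submodule.subset_span ⟨z, rfl⟩
    have h2 := Submodule.mem_map_of_mem (f := φ) hmem
    rw [hφ] at h2
    simpa using h2
  set e : σ → (σ → ℝ) := fun i j => if i = j then 1 else 0 with he
  have hrep : ∀ x : σ → ℝ, φ x = ∑ i, x i * φ (e i) := fun x =>
    LinearMap.pi_apply_eq_sum_univ φ x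
  set q : Polynomial ℝ := ∑ i : σ, Polynomial.C (φ (e i)) * Polynomial.X ^ d i with hqdef
  have hq0 : q = 0 := by
    apply Polynomial.funext
    intro z
    rw [hqdef]
    simp only [Polynomial.eval_finset_sum, Polynomial.eval_mul, Polynomial.eval_C,
      Polynomial.eval_pow, Polynomial.eval_X, Polynomial.eval_zero]
    rw [show ∑ i : σ, φ (e i) * z ^ d i = ∑ i : σ, z ^ d i * φ (e i) by
      exact Finset.sum_congr rfl fun i _ => mul_comm _ _]
    rw [← hrep, hvanish]
  have hcoef : ∀ i : σ, φ (e i) = 0 := by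
    intro i0
    have h1 : Polynomial.coeff q (d i0) = ∑ i : σ, φ (e i) * (if d i0 = d i then 1 else 0) := by
      rw [hqdef]
      rw [Polynomial.finset_sum_coeff]
      exact Finset.sum_congr rfl fun i _ => by
        rw [Polynomial.coeff_C_mul, Polynomial.coeff_X_pow]
    rw [Finset.sum_eq_single i0] at h1
    · rw [hq0] at h1
      simpa using h1.symm
    · intro i _ hne2
      rw [if_neg (fun h => hne2 ((hd h).symm)), mul_zero]
    · intro h
      exact absurd (Finset.mem_univ i0) h
  apply hφ0
  apply LinearMap.ext
  intro x
  rw [hrep]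
  simp [hcoef]

theorem core [Fintype σ] (d : σ → ℕ) (hd : Function.Injective d)
    (P : MvPolynomial σ ℝ)
    (hP : ∀ (m : ℕ) (t : Fin m → ℝ), eval (fun i => ∑ k, t k ^ d i) P = 0) : P = 0 := by
  classical
  suffices H : ∀ (D : ℕ) (P : MvPolynomial σ ℝ), P.totalDegree ≤ D →
      (∀ (m : ℕ) (t : Fin m → ℝ), eval (fun i => ∑ k, t k ^ d i) P = 0) → P = 0 from
    H P.totalDegree P le_rfl hP
  intro D
  induction D with
  | zero =>
    intro P hdeg hV
    have hsup : ∀ u ∈ P.support, u = (0 : σ →₀ ℕ) := by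
      intro u hu
      have h1 := le_totalDegree hu
      have h2 : (u.sum fun _ e => e) = 0 := by omega
      have h3 : ∀ j ∈ u.support, u j = 0 :=
        (Finset.sum_eq_zero_iff).mp h2
      ext j
      by_cases hj : j ∈ u.support
      · exact h3 j hj
      · exact Finsupp.notMem_support_iff.mp hj
    have hC : P = C (coeff 0 P) := by
      ext u
      rcases eq_or_ne u 0 with rfl | hu
      · simp
      · have hns : u ∉ P.support := fun h => hu (hsup u h)
        rw [MvPolynomial.notMem_support_iff.mp hns, coeff_C, if_neg (Ne.symm hu)]
    have hc0 : coeff 0 P = 0 := by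
      have := hV 0 (fun _ => 0)
      rw [hC] at this
      simpa using this
    rw [hC, hc0, map_zero]
  | succ D IH =>
    intro P hdeg hV
    by_cases hsmall : P.totalDegree ≤ D
    · exact IH P hsmall hV
    have hdegpos : P.totalDegree ≠ 0 := by omega
    have hA : ∀ (m : ℕ) (t : Fin m → ℝ), tr (fun i => ∑ k, t k ^ d i) P = P := by
      intro m t
      have hVc : ∀ (m' : ℕ) (t' : Fin m' → ℝ),
          eval (fun i => ∑ k, t' k ^ d i)
            (tr (fun i => ∑ k, t k ^ d i) P - P) = 0 := by
        intro m' t'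
        rw [map_sub, eval_tr, hV m' t', sub_zero]
        have harr : (fun i => (∑ k, t' k ^ d i) + (∑ k, t k ^ d i))
            = fun i => ∑ k : Fin (m' + m), (Fin.append t' t) k ^ d i := by
          funext i
          rw [Fin.sum_univ_add]
          simp
        rw [harr, hV (m' + m) (Fin.append t' t)]
      have hdlt : (tr (fun i => ∑ k, t k ^ d i) P - P).totalDegree ≤ D := by
        have := deg_tr_sub_lt (fun i => ∑ k, t k ^ d i) P hdegpos
        omega
      have hz := IH _ hdlt hVc
      have := sub_eq_zero.mp hz
      exact this
    have hadd : ∀ v w : σ → ℝ, tr v P = P → tr w P = P →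
        tr (fun i => v i + w i) P = P := by
      intro v w hv hw
      rw [← tr_tr, hw, hv]
    have hzero : tr (fun _ => (0:ℝ)) P = P := tr_zero P
    have hnat : ∀ (v : σ → ℝ), tr v P = P →
        ∀ k : ℕ, tr (fun i => (k:ℝ) * v i) P = P := by
      intro v hv k
      induction k with
      | zero => simpa using hzero
      | succ k ihk =>
        have h2 := hadd _ _ ihk hv
        have harr : (fun i => (k:ℝ) * v i + v i) = fun i => ((k+1 : ℕ):ℝ) * v i := by
          funext i; push_cast; ring
        rw [harr] at h2
        exact h2
    have hsmul : ∀ (t : ℝ) (v : σ → ℝ), tr v P = P → tr (fun i => t * v i) P = P :=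
      fun t v hv => tr_smul_eq P v (hnat v hv) t
    have hall : ∀ w : σ → ℝ, tr w P = P := by
      intro w
      have hw : w ∈ Submodule.span ℝ {w : σ → ℝ | ∃ z : ℝ, w = fun i => z ^ d i} := by
        rw [span_curve_top d hd]; trivial
      induction hw using Submodule.span_induction with
      | mem x hx =>
        obtain ⟨z, rfl⟩ := hx
        have := hA 1 (fun _ => z)
        simpa using this
      | zero => exact hzero
      | add x y _ _ hx hy => exact hadd x y hx hy
      | smul a x _ hx => exact hsmul a x hx
    have heval : ∀ y : σ → ℝ, eval y P = 0 := by
      intro y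
      have h1 := congrArg (eval (fun _ : σ => (0:ℝ))) (hall y)
      rw [eval_tr] at h1
      have h2 : eval (fun _ : σ => (0:ℝ)) P = 0 := by
        simpa using hV 0 (fun _ => 0)
      simp only [zero_add] at h1
      exact h1.trans h2
    apply MvPolynomial.funext (q := 0)
    intro y
    rw [heval y, map_zero]

lemma ofDigits_ofFn (B : ℕ) : ∀ (m : ℕ) (g : Fin m → ℕ),
    Nat.ofDigits B (List.ofFn g) = ∑ j : Fin m, g j * B ^ (j : ℕ) := by
  intro m
  induction m with
  | zero => intro g; simp [Nat.ofDigits]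
  | succ m ih =>
    intro g
    rw [List.ofFn_succ, Nat.ofDigits_cons, ih, Fin.sum_univ_succ]
    simp only [Fin.val_zero, pow_zero, mul_one, Fin.val_succ, Function.comp]
    rw [Finset.mul_sum]
    congr 1
    exact Finset.sum_congr rfl fun j _ => by ring

lemma ofDigits_inj (B : ℕ) : ∀ (L1 L2 : List ℕ), L1.length = L2.length →
    (∀ x ∈ L1, x < B) → (∀ x ∈ L2, x < B) →
    Nat.ofDigits B L1 = Nat.ofDigits B L2 → L1 = L2 := by
  intro L1
  induction L1 with
  | nil =>
    intro L2 hlen _ _ _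
    exact (List.length_eq_zero_iff.mp hlen.symm).symm ▸ rfl
  | cons x L1 ih =>
    intro L2 hlen hb1 hb2 heq
    cases L2 with
    | nil => simp at hlen
    | cons y L2 =>
      have hx : x < B := hb1 x List.mem_cons_self
      have hy : y < B := hb2 y List.mem_cons_self
      have hBpos : 0 < B := by omega
      rw [Nat.ofDigits_cons, Nat.ofDigits_cons] at heq
      have hxy : x = y := by
        have h1 : (x + B * Nat.ofDigits B L1) % B = x := by
          rw [Nat.add_mul_mod_self_left, Nat.mod_eq_of_lt hx]
        have h2 : (y + B * Nat.ofDigits B L2) % B = y := by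
          rw [Nat.add_mul_mod_self_left, Nat.mod_eq_of_lt hy]
        rw [← h1, ← h2, heq]
      subst hxy
      have htail : Nat.ofDigits B L1 = Nat.ofDigits B L2 := by
        have := Nat.add_left_cancel heq
        exact Nat.eq_of_mul_eq_mul_left (by omega) this
      rw [ih L2 (by simpa using hlen) (fun z hz => hb1 z (List.mem_cons_of_mem _ hz))
        (fun z hz => hb2 z (List.mem_cons_of_mem _ hz)) htail]

lemma pi_aeval_apply {σ X : Type*} (G : σ → (X → ℝ)) (q : MvPolynomial σ ℝ) (M : X) :
    (aeval G q) M = eval (fun i => G i M) q := by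
  have h := comp_aeval (f := G) (φ := Pi.evalAlgHom ℝ (fun _ : X => ℝ) M)
  have h2 := AlgHom.congr_fun h q
  calc (aeval G q) M = (Pi.evalAlgHom ℝ (fun _ : X => ℝ) M) (aeval G q) := rfl
    _ = aeval (fun i => (G i) M) q := h2
    _ = eval (fun i => G i M) q := by rw [← coe_aeval_eq_eval]; rfl

end Stmt3Aux

/-- In the ring of all real-valued functions on the set of finite multisets of
pairs `(x, y) ∈ ℝ^n × ℝ^n` (pointwise operations), the family `M ↦ p_{a,b}(M)`, indexed by
pairs `(a, b)` with `a ∈ ℕ₊^n` and `b ∈ ℕ^n`, is algebraically independent over ℝ. -/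


theorem stmt3 (n : ℕ) (hn : 1 ≤ n) :
    AlgebraicIndependent ℝ
      (fun ab : {a : Fin n → ℕ // ∀ j, 1 ≤ a j} × (Fin n → ℕ) =>
        (fun M => pInv n ab.1.1 ab.2 M :
          Multiset ((Fin n → ℝ) × (Fin n → ℝ)) → ℝ)) := by
  classical
  rw [algebraicIndependent_iff]
  intro P hP
  obtain ⟨s, q, rfl⟩ := MvPolynomial.exists_finset_rename P
  suffices hq : q = 0 by rw [hq, map_zero]
  set B : ℕ := (s.sup fun i => Finset.univ.sup fun j => max (i.1.1 j) (i.2 j)) + 1 with hB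
  set dig : {a : Fin n → ℕ // ∀ j, 1 ≤ a j} × (Fin n → ℕ) → List ℕ :=
    fun i => List.ofFn i.1.1 ++ List.ofFn i.2 with hdig
  set d : {a : Fin n → ℕ // ∀ j, 1 ≤ a j} × (Fin n → ℕ) → ℕ :=
    fun i => Nat.ofDigits B (dig i) with hd
  have hdsum : ∀ i : {a : Fin n → ℕ // ∀ j, 1 ≤ a j} × (Fin n → ℕ), d i
      = (∑ j : Fin n, i.1.1 j * B ^ (j:ℕ)) + ∑ j : Fin n, i.2 j * B ^ (n + (j:ℕ)) := by
    intro i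
    rw [hd]
    simp only [hdig]
    rw [Nat.ofDigits_append, Stmt3Aux.ofDigits_ofFn, Stmt3Aux.ofDigits_ofFn, List.length_ofFn]
    congr 1
    rw [Finset.mul_sum]
    exact Finset.sum_congr rfl fun j _ => by rw [pow_add]; ring
  have hinj : Function.Injective (fun i : ↥s => d i.1) := by
    intro i1 i2 h
    have hlt : ∀ i : {a : Fin n → ℕ // ∀ j, 1 ≤ a j} × (Fin n → ℕ),
        i ∈ s → ∀ x ∈ dig i, x < B := by
      intro i hi x hx
      have hxle : x ≤ Finset.univ.sup fun j => max (i.1.1 j) (i.2 j) := by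
        simp only [hdig] at hx
        rcases List.mem_append.mp hx with hx | hx
        · obtain ⟨j, rfl⟩ := List.mem_ofFn.mp hx
          exact le_trans (le_max_left _ _) (Finset.le_sup (f := fun j => max (i.1.1 j) (i.2 j)) (Finset.mem_univ j))
        · obtain ⟨j, rfl⟩ := List.mem_ofFn.mp hx
          exact le_trans (le_max_right _ _) (Finset.le_sup (f := fun j => max (i.1.1 j) (i.2 j)) (Finset.mem_univ j))
      have hle2 : (Finset.univ.sup fun j => max (i.1.1 j) (i.2 j))
          ≤ s.sup (fun i => Finset.univ.sup fun j => max (i.1.1 j) (i.2 j)) :=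
        Finset.le_sup (f := fun i => Finset.univ.sup fun j => max (i.1.1 j) (i.2 j)) hi
      rw [hB]
      exact Nat.lt_succ_of_le (hxle.trans hle2)
    have hdigeq : dig i1.1 = dig i2.1 :=
      Stmt3Aux.ofDigits_inj B _ _ (by simp [hdig]) (hlt _ i1.2) (hlt _ i2.2) h
    simp only [hdig] at hdigeq
    obtain ⟨h1, h2⟩ := List.append_inj hdigeq (by simp)
    have ha : (i1.1.1.1 : Fin n → ℕ) = i2.1.1.1 := List.ofFn_injective h1
    have hb : (i1.1.2 : Fin n → ℕ) = i2.1.2 := List.ofFn_injective h2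
    apply Subtype.ext
    exact Prod.ext (Subtype.ext ha) hb
  rw [MvPolynomial.aeval_rename] at hP
  have hM : ∀ M : Multiset ((Fin n → ℝ) × (Fin n → ℝ)),
      MvPolynomial.eval (fun i : ↥s => pInv n i.1.1.1 i.1.2 M) q = 0 := by
    intro M
    have h4 : (MvPolynomial.aeval
        ((fun ab : {a : Fin n → ℕ // ∀ j, 1 ≤ a j} × (Fin n → ℕ) =>
          (fun M => pInv n ab.1.1 ab.2 M :
            Multiset ((Fin n → ℝ) × (Fin n → ℝ)) → ℝ)) ∘ Subtype.val) q) M = 0 := by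
      rw [hP]; rfl
    rw [Stmt3Aux.pi_aeval_apply] at h4
    exact h4
  apply Stmt3Aux.core (fun i : ↥s => d i.1) hinj q
  intro m t
  set pt : Fin m → (Fin n → ℝ) × (Fin n → ℝ) := fun k =>
    (fun j => (t k ^ B ^ (n + (j:ℕ)) - t k ^ B ^ (j:ℕ)) / 2,
     fun j => (t k ^ B ^ (n + (j:ℕ)) + t k ^ B ^ (j:ℕ)) / 2) with hpt
  have hps : ∀ i : {a : Fin n → ℕ // ∀ j, 1 ≤ a j} × (Fin n → ℕ),
      pInv n i.1.1 i.2 (Multiset.map pt Finset.univ.val) = ∑ k, t k ^ d i := by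
    intro i
    unfold pInv
    rw [Multiset.map_map]
    rw [← Finset.sum_eq_multiset_sum]
    refine Finset.sum_congr rfl fun k _ => ?_
    have h1 : ∀ j : Fin n, (pt k).2 j - (pt k).1 j = t k ^ B ^ (j:ℕ) := by
      intro j; simp only [hpt]; ring
    have h2 : ∀ j : Fin n, (pt k).2 j + (pt k).1 j = t k ^ B ^ (n + (j:ℕ)) := by
      intro j; simp only [hpt]; ring
    calc (∏ j, ((pt k).2 j - (pt k).1 j) ^ (i.1.1 j) * ((pt k).2 j + (pt k).1 j) ^ (i.2 j))
        = ∏ j : Fin n, t k ^ (B ^ (j:ℕ) * i.1.1 j + B ^ (n+(j:ℕ)) * i.2 j) := by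
          refine Finset.prod_congr rfl fun j _ => ?_
          rw [h1 j, h2 j, ← pow_mul, ← pow_mul, ← pow_add]
      _ = t k ^ (∑ j : Fin n, (B ^ (j:ℕ) * i.1.1 j + B ^ (n+(j:ℕ)) * i.2 j)) :=
          Finset.prod_pow_eq_pow_sum _ _ _
      _ = t k ^ d i := by
          have hexp : (∑ j : Fin n, (B ^ (j:ℕ) * i.1.1 j + B ^ (n+(j:ℕ)) * i.2 j)) = d i := by
            rw [hdsum i, Finset.sum_add_distrib]
            exact congrArg₂ (· + ·) (Finset.sum_congr rfl fun j _ => mul_comm _ _)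
              (Finset.sum_congr rfl fun j _ => mul_comm _ _)
          rw [hexp]
  have hfin := hM (Multiset.map pt Finset.univ.val)
  rw [show (fun i : ↥s => pInv n i.1.1.1 i.1.2 (Multiset.map pt Finset.univ.val))
      = fun i : ↥s => ∑ k, t k ^ d i.1 from funext fun i => hps i.1] at hfin
  exact hfin
end

section
/- Let x ≤ y be real numbers, a ≥ 2 and b natural numbers, and let T_{x,y} = {(z, z') ∈ ℝ² : x ≤ z ≤ z' ≤ y}. Then ∫_{T_{x,y}} (z' − z)^{a−2} (z' + z)^b d(z, z') = Σ_{i=0}^{b+1} ((1 − (−1)^i)/2) · ((a−2)!·b! / ((a−1+i)!·(b+1−i)!)) · (y − x)^{a−1+i} (y + x)^{b+1−i}. -/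
open MeasureTheory intervalIntegral

lemma beta_aux (U : ℝ) : ∀ (n m : ℕ),
    ∫ u in (0:ℝ)..U, u ^ m * (U - u) ^ n
      = ((m.factorial : ℝ) * n.factorial / (m + n + 1).factorial) * U ^ (m + n + 1) := by
  intro n
  induction n with
  | zero =>
    intro m
    simp only [pow_zero, mul_one, integral_pow, Nat.add_zero, Nat.factorial_zero,
      Nat.cast_one, mul_one]
    rw [zero_pow (Nat.succ_ne_zero m), Nat.factorial_succ]
    have hm : ((m : ℝ) + 1) ≠ 0 := by positivity
    have hf : (m.factorial : ℝ) ≠ 0 := by exact_mod_cast m.factorial_ne_zero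
    push_cast
    field_simp
    ring
  | succ n ih =>
    intro m
    have hu : ∀ t ∈ Set.uIcc (0:ℝ) U, HasDerivAt (fun s : ℝ => s ^ (m+1) / (m+1)) (t ^ m) t := by
      intro t _
      have h := (hasDerivAt_pow (m+1) t).div_const ((m : ℝ) + 1)
      have hm : ((m : ℝ) + 1) ≠ 0 := by positivity
      refine h.congr_deriv ?_
      push_cast
      field_simp
    have hv : ∀ t ∈ Set.uIcc (0:ℝ) U,
        HasDerivAt (fun s : ℝ => (U - s) ^ (n+1)) (-(((n:ℝ)+1) * (U - t) ^ n)) t := by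
      intro t _
      have h1 : HasDerivAt (fun s : ℝ => U - s) (-1) t := (hasDerivAt_id t).const_sub U
      have h := (hasDerivAt_pow (n+1) (U - t)).comp t h1
      refine h.congr_deriv ?_
      push_cast
      ring
    have hiu : IntervalIntegrable (fun t : ℝ => t ^ m) volume 0 U :=
      (continuous_pow m).intervalIntegrable 0 U
    have hiv : IntervalIntegrable (fun t : ℝ => -(((n:ℝ)+1) * (U - t) ^ n)) volume 0 U := by
      apply Continuous.intervalIntegrable
      fun_prop
    have parts := intervalIntegral.integral_mul_deriv_eq_deriv_mul hu hv hiu hiv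
    have hrw : (fun t : ℝ => t ^ (m+1) / (m+1) * -(((n:ℝ)+1) * (U - t) ^ n))
        = fun t : ℝ => (-(((n:ℝ)+1) / ((m:ℝ)+1))) * (t ^ (m+1) * (U - t) ^ n) := by
      funext t; ring
    rw [hrw, intervalIntegral.integral_const_mul, ih (m+1)] at parts
    have hkey : ∫ u in (0:ℝ)..U, u ^ m * (U - u) ^ (n+1)
        = (((n:ℝ)+1) / ((m:ℝ)+1)) * (((m+1).factorial : ℝ) * n.factorial / (m + 1 + n + 1).factorial * U ^ (m + 1 + n + 1)) := by
      rw [sub_self] at parts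
      rw [zero_pow (Nat.succ_ne_zero n), zero_pow (Nat.succ_ne_zero m)] at parts
      simp only [mul_zero, zero_mul, zero_div, sub_zero, zero_sub] at parts
      linarith [parts]
    rw [hkey]
    have hm : ((m : ℝ) + 1) ≠ 0 := by positivity
    rw [Nat.factorial_succ (m), Nat.factorial_succ n]
    have he : m + 1 + n + 1 = m + (n+1) + 1 := by omega
    rw [he]
    have hf : ((m + (n+1) + 1).factorial : ℝ) ≠ 0 := by exact_mod_cast Nat.factorial_ne_zero _
    push_cast
    field_simp


/-- For `x ≤ y`, `a ≥ 2`, `b : ℕ`, and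
`T_{x,y} = {(z, z') : x ≤ z ≤ z' ≤ y}`,
`∫_{T_{x,y}} (z'-z)^{a-2} (z'+z)^b d(z,z') =
  Σ_{i=0}^{b+1} ((1-(-1)^i)/2) ((a-2)!·b!/((a-1+i)!·(b+1-i)!)) (y-x)^{a-1+i} (y+x)^{b+1-i}`. -/
theorem stmt5 (x y : ℝ) (hxy : x ≤ y) (a b : ℕ) (ha : 2 ≤ a) :
    ∫ p in {p : ℝ × ℝ | x ≤ p.1 ∧ p.1 ≤ p.2 ∧ p.2 ≤ y},
        (p.2 - p.1) ^ (a - 2) * (p.2 + p.1) ^ b =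
      ∑ i ∈ Finset.range (b + 2),
        ((1 - (-1 : ℝ) ^ i) / 2) *
          ((Nat.factorial (a - 2) * Nat.factorial b : ℝ) /
            ((Nat.factorial (a - 1 + i) : ℝ) * (Nat.factorial (b + 1 - i) : ℝ))) *
          (y - x) ^ (a - 1 + i) * (y + x) ^ (b + 1 - i) := by
  obtain ⟨c, rfl⟩ : ∃ c, a = c + 2 := ⟨a - 2, by omega⟩
  simp only [show c + 2 - 2 = c by omega, show ∀ i, c + 2 - 1 + i = c + 1 + i by omega]
  set S : Set (ℝ × ℝ) := {p : ℝ × ℝ | x ≤ p.1 ∧ p.1 ≤ p.2 ∧ p.2 ≤ y} with hS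
  set f : ℝ × ℝ → ℝ := fun p => (p.2 - p.1) ^ c * (p.2 + p.1) ^ b with hf
  set T : ℝ × ℝ → ℝ × ℝ := fun z => (z.2, z.2 + z.1) with hTdef
  -- measure preserving shear
  have hT : MeasurePreserving T volume volume := by
    have h := MeasureTheory.measurePreserving_prod_add_swap (volume : Measure ℝ) volume
    rwa [← Measure.volume_eq_prod ℝ ℝ] at h
  have hemb : MeasurableEmbedding T := by
    have : T = ⇑((MeasurableEquiv.prodComm : ℝ × ℝ ≃ᵐ ℝ × ℝ).trans (MeasurableEquiv.shearAddRight ℝ)) := rfl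
    rw [this]
    exact MeasurableEquiv.measurableEmbedding _
  have step1 : ∫ p in S, f p = ∫ p in T ⁻¹' S, f (T p) :=
    (hT.setIntegral_preimage_emb hemb f S).symm
  set A : Set (ℝ × ℝ) := {p : ℝ × ℝ | 0 ≤ p.1 ∧ x ≤ p.2 ∧ p.2 ≤ y - p.1} with hA
  have hpre : T ⁻¹' S = A := by
    ext p
    simp only [Set.mem_preimage, hS, Set.mem_setOf_eq, hA, hTdef]
    constructor
    · rintro ⟨h1, h2, h3⟩; exact ⟨by linarith, h1, by linarith⟩
    · rintro ⟨h1, h2, h3⟩; exact ⟨h2, by linarith, by linarith⟩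
  set g : ℝ × ℝ → ℝ := fun p => p.1 ^ c * (2 * p.2 + p.1) ^ b with hg
  have hfg : (fun p : ℝ × ℝ => f (T p)) = g := by
    funext p; simp only [hf, hTdef, hg]; ring
  rw [step1, hpre, show (fun p => f (T p)) = g from hfg] -- maybe adjust
  -- measurability of A
  have hAmeas : MeasurableSet A := by
    apply MeasurableSet.inter
    · exact measurableSet_le measurable_const measurable_fst
    apply MeasurableSet.inter
    · exact measurableSet_le measurable_const measurable_snd
    · exact measurableSet_le measurable_snd (measurable_const.sub measurable_fst)
  -- integrability
  have hgcont : Continuous g := by fun_prop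
  have hAsub : A ⊆ Set.Icc 0 (y - x) ×ˢ Set.Icc x y := by
    rintro ⟨u, z⟩ ⟨h1, h2, h3⟩
    exact ⟨⟨h1, by simp at *; linarith⟩, ⟨h2, by simp at *; linarith⟩⟩
  have hInt : IntegrableOn g A := by
    apply IntegrableOn.mono_set _ hAsub
    exact hgcont.continuousOn.integrableOn_compact (isCompact_Icc.prod isCompact_Icc)
  -- Fubini
  have step2 : ∫ p in A, g p = ∫ u : ℝ, ∫ z : ℝ, A.indicator g (u, z) := by
    rw [← MeasureTheory.integral_indicator hAmeas]
    rw [show (volume : Measure (ℝ × ℝ)) = (volume : Measure ℝ).prod volume from Measure.volume_eq_prod ℝ ℝ]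
    exact integral_prod _ (by
      rw [← Measure.volume_eq_prod, integrable_indicator_iff hAmeas]
      exact hInt)
  rw [step2]
  -- inner slice
  have hslice : ∀ u : ℝ, (∫ z : ℝ, A.indicator g (u, z))
      = if 0 ≤ u then ∫ z in Set.Icc x (y - u), g (u, z) else 0 := by
    intro u
    by_cases hu : 0 ≤ u
    · rw [if_pos hu, ← MeasureTheory.integral_indicator measurableSet_Icc]
      congr 1
      funext z
      by_cases hz : z ∈ Set.Icc x (y - u)
      · rw [Set.indicator_of_mem hz, Set.indicator_of_mem]
        simp only [hA, Set.mem_setOf_eq]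
        exact ⟨hu, hz.1, by simpa using hz.2⟩
      · rw [Set.indicator_of_notMem hz, Set.indicator_of_notMem]
        intro hm
        exact hz ⟨hm.2.1, hm.2.2⟩
    · rw [if_neg hu]
      have : ∀ z : ℝ, A.indicator g (u, z) = 0 := by
        intro z
        apply Set.indicator_of_notMem
        intro hm
        exact hu hm.1
      simp only [this, MeasureTheory.integral_zero]
  simp only [hslice]
  -- restrict outer integral to Icc 0 (y - x)
  have hzero : ∀ u ∉ Set.Icc (0:ℝ) (y - x),
      (if 0 ≤ u then ∫ z in Set.Icc x (y - u), g (u, z) else 0) = 0 := by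
    intro u hu
    simp only [Set.mem_Icc, not_and_or, not_le] at hu
    by_cases h0 : 0 ≤ u
    · rcases hu with h | h
      · linarith
      · rw [if_pos h0, Set.Icc_eq_empty (by linarith : ¬ x ≤ y - u)]
        simp
    · rw [if_neg h0]
  rw [← setIntegral_eq_integral_of_forall_compl_eq_zero hzero]
  have stepE : ∫ u in Set.Icc (0:ℝ) (y - x),
        (if 0 ≤ u then ∫ z in Set.Icc x (y - u), g (u, z) else 0)
      = ∫ u in Set.Icc (0:ℝ) (y - x), ∫ z in x..(y - u), g (u, z) := by
    apply setIntegral_congr_fun measurableSet_Icc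
    intro u hu
    simp only [Set.mem_Icc] at hu
    dsimp only
    rw [if_pos hu.1, intervalIntegral.integral_of_le (by linarith : x ≤ y - u),
      ← integral_Icc_eq_integral_Ioc]
  rw [stepE, integral_Icc_eq_integral_Ioc,
    ← intervalIntegral.integral_of_le (by linarith : (0:ℝ) ≤ y - x)]
  -- compute the inner interval integral in closed form and expand binomially
  have hF : ∀ u : ℝ, (∫ z in x..(y - u), g (u, z))
      = ∑ i ∈ Finset.range (b + 2),
          (((b+1).choose i : ℝ) * (1 - (-1:ℝ)^i) * (y + x)^(b+1-i) / (2*((b:ℝ)+1)))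
            * (u ^ c * ((y - x) - u) ^ i) := by
    intro u
    have h1 : (∫ z in x..(y - u), g (u, z))
        = u ^ c * ∫ z in x..(y - u), (2 * z + u) ^ b := by
      simp only [hg]
      rw [← intervalIntegral.integral_const_mul]
    rw [h1, intervalIntegral.integral_comp_mul_add (fun t : ℝ => t ^ b) two_ne_zero u,
      integral_pow]
    rw [show 2 * (y - u) + u = ((y - x) - u) + (y + x) by ring,
      show 2 * x + u = (-((y - x) - u)) + (y + x) by ring]
    rw [add_pow, add_pow, ← Finset.sum_sub_distrib]
    rw [smul_eq_mul, Finset.sum_div, Finset.mul_sum, Finset.mul_sum]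
    refine Finset.sum_congr rfl fun i hi => ?_
    rw [neg_pow]
    have hb : ((b:ℝ)+1) ≠ 0 := by positivity
    field_simp
  simp only [hF]
  rw [intervalIntegral.integral_finset_sum (fun i _ => by
    apply Continuous.intervalIntegrable
    fun_prop)]
  -- evaluate each Beta integral and match coefficients
  refine Finset.sum_congr rfl fun i hi => ?_
  rw [intervalIntegral.integral_const_mul, beta_aux (y - x) i c]
  simp only [Finset.mem_range] at hi
  have hile : i ≤ b + 1 := by omega
  have key : ((b+1).choose i : ℝ) * i.factorial * (b+1-i).factorial = (b+1).factorial := by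
    exact_mod_cast Nat.choose_mul_factorial_mul_factorial hile
  have h1 : ((b+1).factorial : ℝ) = ((b:ℝ)+1) * b.factorial := by
    rw [Nat.factorial_succ]; push_cast; ring
  have hb1 : ((b:ℝ)+1) ≠ 0 := by positivity
  have hfi : (i.factorial : ℝ) ≠ 0 := by exact_mod_cast i.factorial_ne_zero
  have hfbi : ((b+1-i).factorial : ℝ) ≠ 0 := by exact_mod_cast (b+1-i).factorial_ne_zero
  have hfci : ((c + i + 1).factorial : ℝ) ≠ 0 := by exact_mod_cast (c+i+1).factorial_ne_zero
  rw [show c + 1 + i = c + i + 1 by omega]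
  field_simp
  linear_combination ((1 - (-1:ℝ)^i) * (y+x)^(b+1-i) * (y-x)^(c+i+1)) * key
    + ((1 - (-1:ℝ)^i) * (y+x)^(b+1-i) * (y-x)^(c+i+1)) * h1
end

section
/- Let n ≥ 1, let x, y ∈ ℝ^n with x_i ≤ y_i for all i, and let (a, b) ∈ ℕ₊^n × ℕ^n. Set I = {i : a_i = 1} and J = {i : a_i ≥ 2}. Then the Lebesgue integral over (z, w) ∈ ℝ^n × ℝ^J of ∏_{i∈I} z_i^{b_i} · ∏_{i∈J} (w_i − z_i)^{a_i−2} (w_i + z_i)^{b_i} times the indicator of the region {x_i ≤ z_i ≤ y_i for i ∈ I, and x_i ≤ z_i ≤ w_i ≤ y_i for i ∈ J} equals the product ∏_{i∈I} [ (1/((b_i+1)·2^{b_i+1})) Σ_{k=0}^{b_i+1} (1 − (−1)^k) C(b_i+1, k) (y_i − x_i)^k (y_i + x_i)^{b_i+1−k} ] · ∏_{i∈J} [ Σ_{k=0}^{b_i+1} ((1 − (−1)^k)/2) ((a_i−2)!·b_i! / ((a_i−1+k)!·(b_i+1−k)!)) (y_i − x_i)^{a_i−1+k} (y_i + x_i)^{b_i+1−k}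 ]. -/
open MeasureTheory Set Finset intervalIntegral

noncomputable def dcoef (p b j : ℕ) : ℝ :=
  (b.descFactorial j : ℝ) * (Nat.factorial p) / (Nat.factorial (p+1+j))

noncomputable def ecoef (p b j : ℕ) : ℝ :=
  (b.descFactorial j : ℝ) * (Nat.factorial p) / (Nat.factorial (p+j))

noncomputable def eps (k : ℕ) : ℝ := (1 - (-1 : ℝ)^k)/2

noncomputable def ccoef (p b k : ℕ) : ℝ :=
  ((Nat.factorial p : ℝ) * (Nat.factorial b)) /
    ((Nat.factorial (p+1+k) : ℝ) * (Nat.factorial (b+1-k)))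

lemma fact1 (p b j : ℕ) : dcoef p b j * ((p:ℝ)+1+j) = ecoef p b j := by
  unfold dcoef ecoef
  rw [show p+1+j = (p+j)+1 from by omega, Nat.factorial_succ]
  have h1 : ((p+j).factorial : ℝ) ≠ 0 := by positivity
  push_cast
  field_simp
  ring

lemma fact2 (p b j : ℕ) : dcoef p b j * ((b - j : ℕ):ℝ) = ecoef p b (j+1) := by
  unfold dcoef ecoef
  rw [Nat.descFactorial_succ, show p+(j+1) = p+1+j from by omega]
  push_cast
  ring

lemma ecoef_zero (p b : ℕ) : ecoef p b 0 = 1 := by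
  have h1 : (p.factorial : ℝ) ≠ 0 := by positivity
  simp [ecoef]
  exact Nat.factorial_ne_zero p

lemma ecoef_top (p b : ℕ) : ecoef p b (b+1) = 0 := by
  simp [ecoef, Nat.descFactorial_eq_zero_iff_lt.2 (Nat.lt_succ_self b)]

lemma cfact1 (p b j : ℕ) (hj : j ≤ b) : ccoef p b (j+1) * ((p:ℝ)+1+(j+1)) = dcoef p b j := by
  unfold ccoef dcoef
  rw [show p+1+(j+1) = (p+1+j)+1 from by omega, show b+1-(j+1) = b - j from by omega,
    Nat.factorial_succ]
  have hb : ((b-j).factorial : ℝ) * (b.descFactorial j : ℝ) = (b.factorial : ℝ) := by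
    exact_mod_cast congrArg (Nat.cast (R := ℝ)) (Nat.factorial_mul_descFactorial hj)
  have h1 : ((p+1+j).factorial : ℝ) ≠ 0 := by positivity
  have h2 : ((b-j).factorial : ℝ) ≠ 0 := by positivity
  have h4 : ((p:ℝ)+1+(j:ℝ)+1) ≠ 0 := by positivity
  rw [← hb]
  push_cast
  field_simp
  ring

lemma cfact2 (p b j : ℕ) (hj : j ≤ b) : ccoef p b j * ((b+1-j : ℕ):ℝ) = dcoef p b j := by
  unfold ccoef dcoef
  rw [show b+1-j = (b-j)+1 from by omega, Nat.factorial_succ]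
  have hb : ((b-j).factorial : ℝ) * (b.descFactorial j : ℝ) = (b.factorial : ℝ) := by
    exact_mod_cast congrArg (Nat.cast (R := ℝ)) (Nat.factorial_mul_descFactorial hj)
  have h1 : ((p+1+j).factorial : ℝ) ≠ 0 := by positivity
  have h2 : ((b-j).factorial : ℝ) ≠ 0 := by positivity
  have h3 : ((b:ℝ) - (j:ℝ) + 1) ≠ 0 := by
    have : (j:ℝ) ≤ b := by exact_mod_cast hj
    nlinarith
  rw [← hb]
  push_cast [Nat.cast_sub hj]
  field_simp

lemma epsfact (j : ℕ) : eps (j+1) + eps j = 1 := by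
  simp only [eps, pow_succ]
  ring
lemma hasDeriv_inner (p b : ℕ) (w z : ℝ) :
    HasDerivAt (fun z => -∑ j ∈ Finset.range (b+1),
        dcoef p b j * ((w-z)^(p+1+j) * (w+z)^(b-j)))
      ((w-z)^p * (w+z)^b) z := by
  have hv : ∀ j, HasDerivAt (fun z => dcoef p b j * ((w-z)^(p+1+j)*(w+z)^(b-j)))
      ((fun j => ecoef p b j * ((w-z)^(p+j) * (w+z)^(b-j))) (j+1)
        - (fun j => ecoef p b j * ((w-z)^(p+j) * (w+z)^(b-j))) j) z := by
    intro j
    have h1 : HasDerivAt (fun z : ℝ => (w - z)) (-1) z := by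
      simpa using (hasDerivAt_id z).const_sub w
    have h2 : HasDerivAt (fun z : ℝ => (w + z)) 1 z := by
      simpa using (hasDerivAt_id z).const_add w
    have h3 := h1.pow (p+1+j)
    have h4 := h2.pow (b-j)
    have h5 := (h3.mul h4).const_mul (dcoef p b j)
    refine h5.congr_deriv (Eq.symm ?_)
    simp only [Pi.pow_apply]
    rw [show p+1+j-1 = p+j from by omega, show b-(j+1) = b-j-1 from by omega,
      show p+(j+1) = p+1+j from by omega]
    have f1 := fact1 p b j
    have f2 := fact2 p b j
    push_cast
    linear_combination ((w-z)^(p+j) * (w+z)^(b-j)) * f1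
      - ((w-z)^(p+1+j) * (w+z)^(b-j-1)) * f2
  have hsum := (HasDerivAt.fun_sum (fun j (_ : j ∈ Finset.range (b+1)) => hv j)).neg
  refine hsum.congr_deriv (Eq.symm ?_)
  rw [Finset.sum_range_sub (fun j => ecoef p b j * ((w-z)^(p+j) * (w+z)^(b-j)))]
  rw [ecoef_top, ecoef_zero]
  simp

lemma F_eval (p b : ℕ) (x w : ℝ) :
    (∫ z in x..w, (w-z)^p * (w+z)^b) =
      ∑ j ∈ Finset.range (b+1), dcoef p b j * ((w-x)^(p+1+j) * (w+x)^(b-j)) := by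
  have hc : Continuous (fun z : ℝ => (w-z)^p * (w+z)^b) := by fun_prop
  rw [intervalIntegral.integral_eq_sub_of_hasDerivAt
    (fun t _ => hasDeriv_inner p b w t) (hc.intervalIntegrable x w)]
  have : ∀ j ∈ Finset.range (b+1), dcoef p b j * ((w-w)^(p+1+j) * (w+w)^(b-j)) = 0 := by
    intro j _
    rw [sub_self, zero_pow (by omega : p+1+j ≠ 0)]
    ring
  rw [Finset.sum_eq_zero this]
  simp
lemma eps_zero : eps 0 = 0 := by simp [eps]

lemma hasDeriv_outer (p b : ℕ) (x w : ℝ) :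
    HasDerivAt (fun w => ∑ k ∈ Finset.range (b+2),
        eps k * ccoef p b k * ((w-x)^(p+1+k) * (w+x)^(b+1-k)))
      (∑ j ∈ Finset.range (b+1), dcoef p b j * ((w-x)^(p+1+j) * (w+x)^(b-j))) w := by
  have hterm : ∀ k, HasDerivAt
      (fun w => eps k * ccoef p b k * ((w-x)^(p+1+k)*(w+x)^(b+1-k)))
      (eps k * ccoef p b k * ((↑(p+1+k) * (w-x)^(p+1+k-1) * 1) * (w+x)^(b+1-k)
        + (w-x)^(p+1+k) * (↑(b+1-k) * (w+x)^(b+1-k-1) * 1))) w := by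
    intro k
    have h1 : HasDerivAt (fun w : ℝ => (w - x)) 1 w := by
      simpa using (hasDerivAt_id w).sub_const x
    have h2 : HasDerivAt (fun w : ℝ => (w + x)) 1 w := by
      simpa using (hasDerivAt_id w).add_const x
    exact ((h1.pow (p+1+k)).mul (h2.pow (b+1-k))).const_mul _
  have hsum := HasDerivAt.fun_sum (fun k (_ : k ∈ Finset.range (b+2)) => hterm k)
  refine hsum.congr_deriv (Eq.symm ?_)
  have expand : ∀ k ∈ Finset.range (b+2),
      eps k * ccoef p b k * ((↑(p+1+k) * (w-x)^(p+1+k-1) * 1) * (w+x)^(b+1-k)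
        + (w-x)^(p+1+k) * (↑(b+1-k) * (w+x)^(b+1-k-1) * 1))
      = eps k * (ccoef p b k * ↑(p+1+k)) * ((w-x)^(p+k) * (w+x)^(b+1-k))
        + eps k * (ccoef p b k * ↑(b+1-k)) * ((w-x)^(p+1+k) * (w+x)^(b-k)) := by
    intro k _
    rw [show p+1+k-1 = p+k from by omega, show b+1-k-1 = b-k from by omega]
    ring
  rw [Finset.sum_congr rfl expand, Finset.sum_add_distrib]
  rw [Finset.sum_range_succ' (fun k => eps k * (ccoef p b k * ↑(p+1+k)) * ((w-x)^(p+k) * (w+x)^(b+1-k))) (b+1)]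
  rw [Finset.sum_range_succ (fun k => eps k * (ccoef p b k * ↑(b+1-k)) * ((w-x)^(p+1+k) * (w+x)^(b-k))) (b+1)]
  rw [eps_zero]
  have hlast : eps (b+1) * (ccoef p b (b+1) * ↑(b+1-(b+1))) * ((w-x)^(p+1+(b+1)) * (w+x)^(b-(b+1))) = 0 := by
    rw [show b+1-(b+1) = 0 from by omega]
    simp
  rw [hlast]
  simp only [zero_mul, mul_zero, add_zero, zero_add]
  rw [← Finset.sum_add_distrib]
  apply Finset.sum_congr rfl
  intro j hj
  have hjb : j ≤ b := by simp at hj; omega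
  have c1 := cfact1 p b j hjb
  have c2 := cfact2 p b j hjb
  have ef := epsfact j
  rw [show p+(j+1) = p+1+j from by omega, show b+1-(j+1) = b-j from by omega]
  have hc1 : (↑(p+1+(j+1)) : ℝ) = (p:ℝ)+1+(j+1) := by push_cast; ring
  rw [hc1]
  linear_combination (-(eps (j+1) * ((w-x)^(p+1+j) * (w+x)^(b-j)))) * c1
    - (eps j * ((w-x)^(p+1+j) * (w+x)^(b-j))) * c2
    - (dcoef p b j * ((w-x)^(p+1+j) * (w+x)^(b-j))) * ef
lemma one_dim (x y : ℝ) (hxy : x ≤ y) (b : ℕ) :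
    (∫ z : ℝ, (Set.Icc x y).indicator (fun z => z ^ b) z) =
      1 / (((b : ℝ) + 1) * 2 ^ (b + 1)) *
        ∑ k ∈ Finset.range (b + 2),
          (1 - (-1 : ℝ) ^ k) * (Nat.choose (b + 1) k : ℝ) *
            (y - x) ^ k * (y + x) ^ (b + 1 - k) := by
  rw [MeasureTheory.integral_indicator measurableSet_Icc,
    MeasureTheory.integral_Icc_eq_integral_Ioc,
    ← intervalIntegral.integral_of_le hxy, integral_pow]
  have e1 : ((2:ℝ)*y)^(b+1) = ∑ k ∈ Finset.range (b+2),
      (y-x)^k * (y+x)^(b+1-k) * (Nat.choose (b+1) k : ℝ) := by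
    rw [show (2*y : ℝ) = (y-x)+(y+x) from by ring, add_pow]
  have e2 : ((2:ℝ)*x)^(b+1) = ∑ k ∈ Finset.range (b+2),
      (x-y)^k * (y+x)^(b+1-k) * (Nat.choose (b+1) k : ℝ) := by
    rw [show (2*x : ℝ) = (x-y)+(y+x) from by ring, add_pow]
  have e3 : ∑ k ∈ Finset.range (b+2),
      (1 - (-1 : ℝ) ^ k) * (Nat.choose (b+1) k : ℝ) * (y-x)^k * (y+x)^(b+1-k)
      = (2*y)^(b+1) - (2*x)^(b+1) := by
    rw [e1, e2, ← Finset.sum_sub_distrib]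
    apply Finset.sum_congr rfl
    intro k _
    have h : (x - y)^k = (-1 : ℝ)^k * (y-x)^k := by
      rw [show x - y = -(y-x) from by ring, neg_pow]
    linear_combination ((Nat.choose (b+1) k : ℝ) * (y+x)^(b+1-k)) * h
  rw [e3]
  have hb : ((b:ℝ)+1) ≠ 0 := by positivity
  have h2 : ((2:ℝ)^(b+1)) ≠ 0 := by positivity
  field_simp
  ring

lemma two_dim (p b : ℕ) (x y : ℝ) (hxy : x ≤ y) :
    (∫ q : ℝ × ℝ, ({q : ℝ × ℝ | x ≤ q.1 ∧ q.1 ≤ q.2 ∧ q.2 ≤ y}.indicator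
        (fun q => (q.2-q.1)^p * (q.2+q.1)^b) q)) =
      ∑ k ∈ Finset.range (b+2), eps k * ccoef p b k * ((y-x)^(p+1+k) * (y+x)^(b+1-k)) := by
  set S : Set (ℝ × ℝ) := {q : ℝ × ℝ | x ≤ q.1 ∧ q.1 ≤ q.2 ∧ q.2 ≤ y} with hSdef
  set g : ℝ × ℝ → ℝ := fun q => (q.2-q.1)^p * (q.2+q.1)^b with hgdef
  have hgc : Continuous g := by fun_prop
  have hSc : IsClosed S := by
    have : S = {q : ℝ × ℝ | x ≤ q.1} ∩ ({q : ℝ × ℝ | q.1 ≤ q.2} ∩ {q : ℝ × ℝ | q.2 ≤ y}) := by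
      ext q; simp [hSdef]
    rw [this]
    exact (isClosed_le continuous_const continuous_fst).inter
      ((isClosed_le continuous_fst continuous_snd).inter
        (isClosed_le continuous_snd continuous_const))
  have hS : MeasurableSet S := hSc.measurableSet
  have hsub : S ⊆ Set.Icc (x, x) (y, y) := by
    rintro q ⟨h1, h2, h3⟩
    refine ⟨⟨h1, le_trans h1 h2⟩, ⟨le_trans h2 h3, h3⟩⟩
  have hInt : Integrable (S.indicator g) := by
    refine MeasureTheory.IntegrableOn.integrable_indicator ?_ hS
    exact ((hgc.continuousOn).integrableOn_compact isCompact_Icc).mono_set hsub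
  rw [MeasureTheory.Measure.volume_eq_prod] at hInt ⊢
  rw [MeasureTheory.integral_prod_symm _ hInt]
  have inner : ∀ w : ℝ, (∫ z : ℝ, S.indicator g (z, w)) =
      (Set.Icc x y).indicator
        (fun w => ∑ j ∈ Finset.range (b+1), dcoef p b j * ((w-x)^(p+1+j) * (w+x)^(b-j))) w := by
    intro w
    by_cases hw : w ∈ Set.Icc x y
    · rw [Set.indicator_of_mem hw]
      have hfz : (fun z => S.indicator g (z, w)) =
          (Set.Icc x w).indicator (fun z => (w-z)^p * (w+z)^b) := by
        funext z
        by_cases hz : z ∈ Set.Icc x w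
        · rw [Set.indicator_of_mem hz,
            Set.indicator_of_mem (show (z, w) ∈ S from ⟨hz.1, hz.2, hw.2⟩)]
        · rw [Set.indicator_of_notMem hz, Set.indicator_of_notMem
            (fun h => hz ⟨h.1, h.2.1⟩)]
      rw [hfz, MeasureTheory.integral_indicator measurableSet_Icc,
        MeasureTheory.integral_Icc_eq_integral_Ioc,
        ← intervalIntegral.integral_of_le hw.1, F_eval]
    · rw [Set.indicator_of_notMem hw]
      have hfz : (fun z => S.indicator g (z, w)) = fun _ => (0:ℝ) := by
        funext z
        exact Set.indicator_of_notMem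
          (fun h => hw ⟨le_trans h.1 h.2.1, h.2.2⟩) _
      rw [hfz, integral_zero]
  simp only [inner]
  rw [MeasureTheory.integral_indicator measurableSet_Icc,
    MeasureTheory.integral_Icc_eq_integral_Ioc,
    ← intervalIntegral.integral_of_le hxy]
  have hFc : Continuous (fun w : ℝ => ∑ j ∈ Finset.range (b+1),
      dcoef p b j * ((w-x)^(p+1+j) * (w+x)^(b-j))) := by fun_prop
  rw [intervalIntegral.integral_eq_sub_of_hasDerivAt
    (fun t _ => hasDeriv_outer p b x t) (hFc.intervalIntegrable x y)]
  have hGx : ∑ k ∈ Finset.range (b+2),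
      eps k * ccoef p b k * ((x-x)^(p+1+k) * (x+x)^(b+1-k)) = 0 := by
    apply Finset.sum_eq_zero
    intro k _
    rw [sub_self, zero_pow (by omega : p+1+k ≠ 0)]
    ring
  rw [hGx, sub_zero]
noncomputable def structEquiv {n : ℕ} (P : Fin n → Prop) [DecidablePred P] :
    (({i // ¬ P i} → ℝ) × ({i // P i} → ℝ × ℝ)) ≃ᵐ ((Fin n → ℝ) × ({i // P i} → ℝ)) :=
  ((MeasurableEquiv.refl ({i // ¬ P i} → ℝ)).prodCongr
      (MeasurableEquiv.arrowProdEquivProdArrow ℝ ℝ {i // P i})).trans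
    ((MeasurableEquiv.prodAssoc.symm).trans
      (((MeasurableEquiv.prodComm :
          (({i // ¬ P i} → ℝ) × ({i // P i} → ℝ)) ≃ᵐ (({i // P i} → ℝ) × ({i // ¬ P i} → ℝ))).prodCongr
        (MeasurableEquiv.refl ({i // P i} → ℝ))).trans
        (((MeasurableEquiv.piEquivPiSubtypeProd (fun _ : Fin n => ℝ) P).symm).prodCongr
          (MeasurableEquiv.refl ({i // P i} → ℝ)))))

lemma structEquiv_snd {n : ℕ} (P : Fin n → Prop) [DecidablePred P]
    (uv : ({i // ¬ P i} → ℝ) × ({i // P i} → ℝ × ℝ)) :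
    (structEquiv P uv).2 = fun i => (uv.2 i).2 := rfl

lemma structEquiv_fst {n : ℕ} (P : Fin n → Prop) [DecidablePred P]
    (uv : ({i // ¬ P i} → ℝ) × ({i // P i} → ℝ × ℝ)) :
    (structEquiv P uv).1 = (Equiv.piEquivPiSubtypeProd P (fun _ : Fin n => ℝ)).symm
      (fun i => (uv.2 i).1, uv.1) := rfl

lemma structEquiv_mp {n : ℕ} (P : Fin n → Prop) [DecidablePred P] :
    MeasurePreserving (structEquiv P) volume volume := by
  have m1 : MeasurePreserving
      (⇑((MeasurableEquiv.refl ({i // ¬ P i} → ℝ)).prodCongr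
        (MeasurableEquiv.arrowProdEquivProdArrow ℝ ℝ {i // P i})))
      volume (Measure.prod volume (Measure.prod volume volume)) :=
    (MeasurePreserving.id volume).prod
      (volume_measurePreserving_arrowProdEquivProdArrow ℝ ℝ {i // P i})
  have m2 : MeasurePreserving (⇑((MeasurableEquiv.prodAssoc
      : ((({i // ¬ P i} → ℝ) × ({i // P i} → ℝ)) × ({i // P i} → ℝ))
        ≃ᵐ (({i // ¬ P i} → ℝ) × (({i // P i} → ℝ) × ({i // P i} → ℝ)))).symm))
      (Measure.prod volume (Measure.prod volume volume))
      (Measure.prod (Measure.prod volume volume) volume) :=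
    (measurePreserving_prodAssoc volume volume volume).symm _
  have m3 : MeasurePreserving
      (⇑((MeasurableEquiv.prodComm :
          (({i // ¬ P i} → ℝ) × ({i // P i} → ℝ)) ≃ᵐ (({i // P i} → ℝ) × ({i // ¬ P i} → ℝ))).prodCongr
        (MeasurableEquiv.refl ({i // P i} → ℝ))))
      (Measure.prod (Measure.prod volume volume) volume)
      (Measure.prod (Measure.prod volume volume) volume) :=
    MeasurePreserving.prod MeasureTheory.Measure.measurePreserving_swap (MeasurePreserving.id volume)
  have m4 : MeasurePreserving
      (⇑(((MeasurableEquiv.piEquivPiSubtypeProd (fun _ : Fin n => ℝ) P).symm).prodCongr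
        (MeasurableEquiv.refl ({i // P i} → ℝ))))
      (Measure.prod (Measure.prod volume volume) volume) volume :=
    MeasurePreserving.prod ((volume_preserving_piEquivPiSubtypeProd (fun _ : Fin n => ℝ) P).symm _)
      (MeasurePreserving.id volume)
  exact ((m4.comp m3).comp m2).comp m1

lemma plumb {n : ℕ} (P : Fin n → Prop) [DecidablePred P]
    (φ : {i // ¬ P i} → ℝ → ℝ) (ψ : {i // P i} → ℝ × ℝ → ℝ) :
    (∫ zw : (Fin n → ℝ) × ({i // P i} → ℝ),
        (∏ i : {i // ¬ P i}, φ i (zw.1 i.1)) * ∏ i : {i // P i}, ψ i (zw.1 i.1, zw.2 i))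
      = (∏ i : {i // ¬ P i}, ∫ z : ℝ, φ i z) * ∏ i : {i // P i}, ∫ q : ℝ × ℝ, ψ i q := by
  classical
  rw [← (structEquiv_mp P).integral_comp']
  have hpt : ∀ uv : ({i // ¬ P i} → ℝ) × ({i // P i} → ℝ × ℝ),
      ((∏ i : {i // ¬ P i}, φ i ((structEquiv P uv).1 i.1)) *
        ∏ i : {i // P i}, ψ i ((structEquiv P uv).1 i.1, (structEquiv P uv).2 i))
      = (∏ i : {i // ¬ P i}, φ i (uv.1 i)) * ∏ i : {i // P i}, ψ i (uv.2 i) := by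
    intro uv
    congr 1
    · apply Finset.prod_congr rfl
      intro i _
      rw [structEquiv_fst, Equiv.piEquivPiSubtypeProd_symm_apply, dif_neg i.2]
    · apply Finset.prod_congr rfl
      intro i _
      rw [structEquiv_fst, structEquiv_snd, Equiv.piEquivPiSubtypeProd_symm_apply, dif_pos i.2]
  simp only [hpt]
  rw [MeasureTheory.Measure.volume_eq_prod,
    MeasureTheory.integral_prod_mul (f := fun u : {i // ¬ P i} → ℝ => ∏ i, φ i (u i))
      (g := fun v : {i // P i} → ℝ × ℝ => ∏ i, ψ i (v i)),
    MeasureTheory.integral_fintype_prod_volume_eq_prod, MeasureTheory.integral_fintype_prod_volume_eq_prod]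




/-- Let `x ≤ y` in `ℝ^n` and `(a, b) ∈ ℕ₊^n × ℕ^n`, with `I = {i : a_i = 1}`
and `J = {i : a_i ≥ 2}`.  The Lebesgue integral over `(z, w) ∈ ℝ^n × ℝ^J` of
`∏_{i∈I} z_i^{b_i} ∏_{i∈J} (w_i - z_i)^{a_i-2} (w_i + z_i)^{b_i}` over the region
`{x_i ≤ z_i ≤ y_i for i ∈ I, x_i ≤ z_i ≤ w_i ≤ y_i for i ∈ J}` equals the stated product
of one-dimensional values. -/
theorem stmt6 (n : ℕ) (hn : 1 ≤ n) (x y : Fin n → ℝ) (hxy : ∀ i, x i ≤ y i)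
    (a b : Fin n → ℕ) (ha : ∀ i, 1 ≤ a i) :
    (∫ zw : (Fin n → ℝ) × ({i : Fin n // 2 ≤ a i} → ℝ) in
        {zw : (Fin n → ℝ) × ({i : Fin n // 2 ≤ a i} → ℝ) |
          (∀ i, a i = 1 → x i ≤ zw.1 i ∧ zw.1 i ≤ y i) ∧
          (∀ i : {i : Fin n // 2 ≤ a i},
            x i.1 ≤ zw.1 i.1 ∧ zw.1 i.1 ≤ zw.2 i ∧ zw.2 i ≤ y i.1)},
        (∏ i ∈ Finset.univ.filter (fun i => a i = 1), zw.1 i ^ b i) *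
          ∏ i : {i : Fin n // 2 ≤ a i},
            (zw.2 i - zw.1 i.1) ^ (a i.1 - 2) * (zw.2 i + zw.1 i.1) ^ b i.1) =
      (∏ i ∈ Finset.univ.filter (fun i => a i = 1),
        (1 / (((b i : ℝ) + 1) * 2 ^ (b i + 1)) *
          ∑ k ∈ Finset.range (b i + 2),
            (1 - (-1 : ℝ) ^ k) * (Nat.choose (b i + 1) k : ℝ) *
              (y i - x i) ^ k * (y i + x i) ^ (b i + 1 - k))) *
      ∏ i ∈ Finset.univ.filter (fun i => 2 ≤ a i),
        ∑ k ∈ Finset.range (b i + 2),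
          ((1 - (-1 : ℝ) ^ k) / 2) *
            ((Nat.factorial (a i - 2) * Nat.factorial (b i) : ℝ) /
              ((Nat.factorial (a i - 1 + k) : ℝ) * (Nat.factorial (b i + 1 - k) : ℝ))) *
            (y i - x i) ^ (a i - 1 + k) * (y i + x i) ^ (b i + 1 - k) := by
  classical
  have hiff1 : ∀ i : Fin n, i ∈ Finset.univ.filter (fun i => a i = 1) ↔ ¬ 2 ≤ a i := by
    intro i
    simp only [Finset.mem_filter, Finset.mem_univ, true_and]
    have := ha i; omega
  have hiff2 : ∀ i : Fin n, i ∈ Finset.univ.filter (fun i => 2 ≤ a i) ↔ 2 ≤ a i := by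
    intro i; simp
  set S : Set ((Fin n → ℝ) × ({i : Fin n // 2 ≤ a i} → ℝ)) :=
    {zw : (Fin n → ℝ) × ({i : Fin n // 2 ≤ a i} → ℝ) |
      (∀ i, a i = 1 → x i ≤ zw.1 i ∧ zw.1 i ≤ y i) ∧
      (∀ i : {i : Fin n // 2 ≤ a i},
        x i.1 ≤ zw.1 i.1 ∧ zw.1 i.1 ≤ zw.2 i ∧ zw.2 i ≤ y i.1)} with hSdef
  have hS : MeasurableSet S := by
    rw [hSdef, Set.setOf_and]
    apply MeasurableSet.inter
    · rw [Set.setOf_forall]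
      apply MeasurableSet.iInter
      intro i
      by_cases hai : a i = 1
      · have hset : {zw : (Fin n → ℝ) × ({i : Fin n // 2 ≤ a i} → ℝ) |
            a i = 1 → x i ≤ zw.1 i ∧ zw.1 i ≤ y i}
            = {zw : (Fin n → ℝ) × ({i : Fin n // 2 ≤ a i} → ℝ) | x i ≤ zw.1 i}
              ∩ {zw : (Fin n → ℝ) × ({i : Fin n // 2 ≤ a i} → ℝ) | zw.1 i ≤ y i} := by
          ext zw; simp [hai]
        rw [hset]
        refine (measurableSet_le ?_ ?_).inter (measurableSet_le ?_ ?_) <;> fun_prop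
      · have hset : {zw : (Fin n → ℝ) × ({i : Fin n // 2 ≤ a i} → ℝ) |
            a i = 1 → x i ≤ zw.1 i ∧ zw.1 i ≤ y i} = Set.univ := by
          ext zw; simp [hai]
        rw [hset]
        exact MeasurableSet.univ
    · rw [Set.setOf_forall]
      apply MeasurableSet.iInter
      intro i
      have hset : {zw : (Fin n → ℝ) × ({i : Fin n // 2 ≤ a i} → ℝ) |
          x i.1 ≤ zw.1 i.1 ∧ zw.1 i.1 ≤ zw.2 i ∧ zw.2 i ≤ y i.1}
          = {zw : (Fin n → ℝ) × ({i : Fin n // 2 ≤ a i} → ℝ) | x i.1 ≤ zw.1 i.1}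
            ∩ ({zw : (Fin n → ℝ) × ({i : Fin n // 2 ≤ a i} → ℝ) | zw.1 i.1 ≤ zw.2 i}
              ∩ {zw : (Fin n → ℝ) × ({i : Fin n // 2 ≤ a i} → ℝ) | zw.2 i ≤ y i.1}) := by
        ext zw; simp [and_assoc]
      rw [hset]
      refine (measurableSet_le ?_ ?_).inter
        ((measurableSet_le ?_ ?_).inter (measurableSet_le ?_ ?_)) <;> fun_prop
  rw [← MeasureTheory.integral_indicator hS]
  have hpointfun : S.indicator (fun zw : (Fin n → ℝ) × ({i : Fin n // 2 ≤ a i} → ℝ) =>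
        (∏ i ∈ Finset.univ.filter (fun i => a i = 1), zw.1 i ^ b i) *
          ∏ i : {i : Fin n // 2 ≤ a i},
            (zw.2 i - zw.1 i.1) ^ (a i.1 - 2) * (zw.2 i + zw.1 i.1) ^ b i.1)
      = fun zw => (∏ i : {i : Fin n // ¬ 2 ≤ a i},
            (Set.Icc (x i.1) (y i.1)).indicator (fun z => z ^ b i.1) (zw.1 i.1)) *
          ∏ i : {i : Fin n // 2 ≤ a i},
            ({q : ℝ × ℝ | x i.1 ≤ q.1 ∧ q.1 ≤ q.2 ∧ q.2 ≤ y i.1}).indicator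
              (fun q => (q.2 - q.1) ^ (a i.1 - 2) * (q.2 + q.1) ^ b i.1)
              (zw.1 i.1, zw.2 i) := by
    funext zw
    by_cases hzw : zw ∈ S
    · rw [Set.indicator_of_mem hzw]
      obtain ⟨hz1, hz2⟩ := hzw
      congr 1
      · rw [Finset.prod_subtype _ hiff1 (fun i => zw.1 i ^ b i)]
        apply Finset.prod_congr rfl
        intro i _
        rw [Set.indicator_of_mem]
        exact hz1 i.1 (by have h2 := ha i.1; have h3 := i.2; omega)
      · apply Finset.prod_congr rfl
        intro i _
        rw [Set.indicator_of_mem (show (zw.1 i.1, zw.2 i) ∈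
          {q : ℝ × ℝ | x i.1 ≤ q.1 ∧ q.1 ≤ q.2 ∧ q.2 ≤ y i.1} from hz2 i)]
    · rw [Set.indicator_of_notMem hzw]
      symm
      by_cases h1 : ∀ i, a i = 1 → x i ≤ zw.1 i ∧ zw.1 i ≤ y i
      · have h2 : ¬ ∀ i : {i : Fin n // 2 ≤ a i},
            x i.1 ≤ zw.1 i.1 ∧ zw.1 i.1 ≤ zw.2 i ∧ zw.2 i ≤ y i.1 :=
          fun hh => hzw ⟨h1, hh⟩
        rw [not_forall] at h2
        obtain ⟨i, hi⟩ := h2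
        apply mul_eq_zero_of_right
        exact Finset.prod_eq_zero (Finset.mem_univ i) (Set.indicator_of_notMem (show (zw.1 i.1, zw.2 i) ∉
          {q : ℝ × ℝ | x i.1 ≤ q.1 ∧ q.1 ≤ q.2 ∧ q.2 ≤ y i.1} from hi) _)
      · rw [not_forall] at h1
        obtain ⟨i, hi⟩ := h1
        rw [Classical.not_imp] at hi
        apply mul_eq_zero_of_left
        refine Finset.prod_eq_zero
          (Finset.mem_univ (⟨i, by have := hi.1; omega⟩ : {i : Fin n // ¬ 2 ≤ a i})) ?_
        apply Set.indicator_of_notMem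
        simpa [Set.mem_Icc] using hi.2
  simp only [hpointfun]
  refine (plumb (fun i => 2 ≤ a i)
    (fun i => (Set.Icc (x i.1) (y i.1)).indicator (fun z => z ^ b i.1))
    (fun i => ({q : ℝ × ℝ | x i.1 ≤ q.1 ∧ q.1 ≤ q.2 ∧ q.2 ≤ y i.1}).indicator
      (fun q => (q.2 - q.1) ^ (a i.1 - 2) * (q.2 + q.1) ^ b i.1))).trans ?_
  congr 1
  · rw [Finset.prod_subtype _ hiff1 (fun i =>
      (1 / (((b i : ℝ) + 1) * 2 ^ (b i + 1)) *
        ∑ k ∈ Finset.range (b i + 2),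
          (1 - (-1 : ℝ) ^ k) * (Nat.choose (b i + 1) k : ℝ) *
            (y i - x i) ^ k * (y i + x i) ^ (b i + 1 - k)))]
    apply Finset.prod_congr rfl
    intro i _
    exact one_dim (x i.1) (y i.1) (hxy i.1) (b i.1)
  · rw [Finset.prod_subtype _ hiff2 (fun i =>
      ∑ k ∈ Finset.range (b i + 2),
        ((1 - (-1 : ℝ) ^ k) / 2) *
          ((Nat.factorial (a i - 2) * Nat.factorial (b i) : ℝ) /
            ((Nat.factorial (a i - 1 + k) : ℝ) * (Nat.factorial (b i + 1 - k) : ℝ))) *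
          (y i - x i) ^ (a i - 1 + k) * (y i + x i) ^ (b i + 1 - k))]
    apply Finset.prod_congr rfl
    intro i _
    refine (two_dim (a i.1 - 2) (b i.1) (x i.1) (y i.1) (hxy i.1)).trans ?_
    apply Finset.sum_congr rfl
    intro k _
    have hae : a i.1 - 2 + 1 + k = a i.1 - 1 + k := by have := i.2; omega
    simp only [eps, ccoef, hae]
    push_cast
    ring
end

section
/- Let m, n ≥ 1 and let X, Y : {1,…,m} → ℝ^n × ℝ^n be two m-tuples of pairs of points. If there is no permutation σ of {1,…,m} with X∘σ = Y, then there exists a polynomial f in the variables x_{ij}, y_{ij} (1 ≤ i ≤ m, 1 ≤ j ≤ n) over ℝ that is invariant under simultaneous permutation of the index i in all variables, such that f evaluated at the point determined by X differs from f evaluated at the point determined by Y. -/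
open MvPolynomial

lemma exists_perm_of_fiber_card {α β : Type*} [Fintype α] (f g : α → β)
    (h : ∀ b, Nat.card {a // f a = b} = Nat.card {a // g a = b}) :
    ∃ σ : Equiv.Perm α, f ∘ σ = g := by
  classical
  have e : ∀ b, {a // g a = b} ≃ {a // f a = b} := fun b =>
    Fintype.equivOfCardEq (by simpa [Nat.card_eq_fintype_card] using (h b).symm)
  refine ⟨(Equiv.sigmaFiberEquiv g).symm.trans
    ((Equiv.sigmaCongrRight e).trans (Equiv.sigmaFiberEquiv f)), ?_⟩
  funext i
  exact (e (g i) ⟨i, rfl⟩).2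


/-- If two `m`-tuples `X, Y` of pairs of points in `ℝ^n × ℝ^n` do not differ
by a permutation, then there is a polynomial in the variables `x_{ij}, y_{ij}` (here
`Sum.inl (i,j) = x_{ij}`, `Sum.inr (i,j) = y_{ij}`), invariant under simultaneous
permutation of the index `i`, taking different values at the evaluation points determined
by `X` and `Y`. -/
theorem stmt8 (m n : ℕ) (hm : 1 ≤ m) (hn : 1 ≤ n)
    (X Y : Fin m → (Fin n → ℝ) × (Fin n → ℝ))
    (h : ¬∃ σ : Equiv.Perm (Fin m), X ∘ σ = Y) :
    ∃ f : MvPolynomial ((Fin m × Fin n) ⊕ (Fin m × Fin n)) ℝ,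
      (∀ σ : Equiv.Perm (Fin m),
        rename (Sum.map (fun p : Fin m × Fin n => (σ p.1, p.2))
          (fun p : Fin m × Fin n => (σ p.1, p.2))) f = f) ∧
      eval (Sum.elim (fun p : Fin m × Fin n => (X p.1).1 p.2)
          (fun p : Fin m × Fin n => (X p.1).2 p.2)) f ≠
        eval (Sum.elim (fun p : Fin m × Fin n => (Y p.1).1 p.2)
          (fun p : Fin m × Fin n => (Y p.1).2 p.2)) f := by
  classical
  obtain ⟨u, hu⟩ : ∃ u, Nat.card {i // X i = u} ≠ Nat.card {i // Y i = u} := by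
    by_contra hc
    push_neg at hc
    exact h (exists_perm_of_fiber_card X Y hc)
  set E : (Fin n → ℝ) × (Fin n → ℝ) → (Fin n ⊕ Fin n) → ℝ :=
    fun v => Sum.elim v.1 v.2 with hE
  have hEinj : Function.Injective E := by
    intro a b hab
    exact Prod.ext (funext fun j => congrFun hab (Sum.inl j))
      (funext fun j => congrFun hab (Sum.inr j))
  set S : Finset ((Fin n → ℝ) × (Fin n → ℝ)) :=
    Finset.univ.image X ∪ Finset.univ.image Y with hS
  set g : MvPolynomial (Fin n ⊕ Fin n) ℝ :=
    ∏ v ∈ S.erase u, ∑ k, (MvPolynomial.X k - C (E v k)) ^ 2 with hg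
  set evalg : (Fin n → ℝ) × (Fin n → ℝ) → ℝ :=
    fun w => ∏ v ∈ S.erase u, ∑ k, (E w k - E v k) ^ 2 with hevalgdef
  have hevalg : ∀ w, eval (E w) g = evalg w := by
    intro w
    simp [hg, hevalgdef]
  have hc0 : 0 < evalg u := by
    apply Finset.prod_pos
    intro v hv
    have hvne : v ≠ u := Finset.ne_of_mem_erase hv
    have hEne : E u ≠ E v := fun hh => hvne (hEinj hh).symm
    obtain ⟨k, hk⟩ := Function.ne_iff.mp hEne
    refine Finset.sum_pos' (fun k _ => sq_nonneg _) ⟨k, Finset.mem_univ k, ?_⟩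
    have := sub_ne_zero.mpr hk
    positivity
  have hzero : ∀ w ∈ S, w ≠ u → evalg w = 0 := by
    intro w hw hne
    apply Finset.prod_eq_zero (Finset.mem_erase.mpr ⟨hne, hw⟩)
    simp
  set ι : Fin m → (Fin n ⊕ Fin n) → (Fin m × Fin n) ⊕ (Fin m × Fin n) :=
    fun i => Sum.map (fun j => (i, j)) (fun j => (i, j)) with hι
  refine ⟨∑ i, rename (ι i) g, ?_, ?_⟩
  · intro σ
    rw [map_sum]
    have : ∀ i : Fin m,
        rename (Sum.map (fun p : Fin m × Fin n => (σ p.1, p.2))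
          (fun p : Fin m × Fin n => (σ p.1, p.2))) (rename (ι i) g)
        = rename (ι (σ i)) g := by
      intro i
      rw [rename_rename]
      have hfun : (Sum.map (fun p : Fin m × Fin n => (σ p.1, p.2))
          (fun p : Fin m × Fin n => (σ p.1, p.2))) ∘ ι i = ι (σ i) := by
        funext k; cases k <;> rfl
      rw [hfun]
    simp_rw [this]
    exact Equiv.sum_comp σ (fun i => rename (ι i) g)
  · have key : ∀ (Z : Fin m → (Fin n → ℝ) × (Fin n → ℝ)),
        eval (Sum.elim (fun p : Fin m × Fin n => (Z p.1).1 p.2)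
          (fun p : Fin m × Fin n => (Z p.1).2 p.2)) (∑ i, rename (ι i) g)
        = (Finset.univ.filter (fun i => Z i = u)).card • evalg u
          + ∑ i ∈ Finset.univ.filter (fun i => ¬ Z i = u), evalg (Z i) := by
      intro Z
      rw [map_sum]
      have h1 : ∀ i : Fin m,
          eval (Sum.elim (fun p : Fin m × Fin n => (Z p.1).1 p.2)
            (fun p : Fin m × Fin n => (Z p.1).2 p.2)) (rename (ι i) g)
          = evalg (Z i) := by
        intro i
        rw [eval_rename]
        rw [← hevalg (Z i)]
        have hfun : (Sum.elim (fun p : Fin m × Fin n => (Z p.1).1 p.2)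
            (fun p : Fin m × Fin n => (Z p.1).2 p.2)) ∘ ι i = E (Z i) := by
          funext k; cases k <;> rfl
        rw [hfun]
      simp_rw [h1]
      rw [← Finset.sum_filter_add_sum_filter_not Finset.univ (fun i => Z i = u)]
      congr 1
      rw [Finset.sum_congr rfl (fun i hi => by
        rw [(Finset.mem_filter.mp hi).2]), Finset.sum_const]
    have keyX := key X
    have keyY := key Y
    have hXz : ∑ i ∈ Finset.univ.filter (fun i => ¬ X i = u), evalg (X i) = 0 := by
      apply Finset.sum_eq_zero
      intro i hi
      exact hzero (X i) (Finset.mem_union_left _ (Finset.mem_image_of_mem X (Finset.mem_univ i)))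
        (Finset.mem_filter.mp hi).2
    have hYz : ∑ i ∈ Finset.univ.filter (fun i => ¬ Y i = u), evalg (Y i) = 0 := by
      apply Finset.sum_eq_zero
      intro i hi
      exact hzero (Y i) (Finset.mem_union_right _ (Finset.mem_image_of_mem Y (Finset.mem_univ i)))
        (Finset.mem_filter.mp hi).2
    rw [keyX, keyY, hXz, hYz, add_zero, add_zero]
    have hcard : (Finset.univ.filter (fun i => X i = u)).card ≠
        (Finset.univ.filter (fun i => Y i = u)).card := by
      simpa [Nat.card_eq_fintype_card, Fintype.card_subtype] using hu
    intro heq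
    apply hcard
    have : ((Finset.univ.filter (fun i => X i = u)).card : ℝ) * evalg u
        = ((Finset.univ.filter (fun i => Y i = u)).card : ℝ) * evalg u := by
      simpa [nsmul_eq_mul] using heq
    exact_mod_cast mul_right_cancel₀ (ne_of_gt hc0) this
end

section
/- Let n ≥ 1 and let A, B be finite multisets of pairs (x, y) ∈ ℝ^n × ℝ^n. If q_{a,b}(A) = q_{a,b}(B) for every (a, b) ∈ ℕ^n × ℕ^n with (a, b) ≠ (0, 0), then the multisets obtained from A and B by removing all copies of the zero pair (0, 0) are equal. -/
open scoped Classical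

/-- `q_{a,b}(M) = Σ_{(x,y) ∈ M} ∏_j x_j^{a_j} y_j^{b_j}`. -/
noncomputable def qInv (n : ℕ) (a b : Fin n → ℕ)
    (M : Multiset ((Fin n → ℝ) × (Fin n → ℝ))) : ℝ :=
  (M.map (fun xy => ∏ j, xy.1 j ^ a j * xy.2 j ^ b j)).sum

open MvPolynomial in
/-- Interpolation: a polynomial taking value 1 at `s` and 0 at other points of `T`. -/
lemma interp {σ : Type*} (T : Finset (σ → ℝ)) (s : σ → ℝ) :
    ∃ P : MvPolynomial σ ℝ, eval s P = 1 ∧ ∀ t ∈ T, t ≠ s → eval t P = 0 := by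
  classical
  set fac : (σ → ℝ) → MvPolynomial σ ℝ := fun t =>
    if h : ∃ j, s j ≠ t j then C (s h.choose - t h.choose)⁻¹ * (X h.choose - C (t h.choose))
    else 1 with hfac
  refine ⟨∏ t ∈ T.erase s, fac t, ?_, ?_⟩
  · rw [map_prod]
    refine Finset.prod_eq_one fun t ht => ?_
    have hts : t ≠ s := (Finset.mem_erase.mp ht).1
    have h : ∃ j, s j ≠ t j := by
      by_contra hc
      push_neg at hc
      exact hts (funext fun j => (hc j).symm)
    simp only [hfac, dif_pos h, map_mul, map_sub, eval_C, eval_X]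
    have := h.choose_spec
    field_simp
  · intro t ht hts
    have htT : t ∈ T.erase s := Finset.mem_erase.mpr ⟨hts, ht⟩
    rw [map_prod]
    refine Finset.prod_eq_zero htT ?_
    have h : ∃ j, s j ≠ t j := by
      by_contra hc
      push_neg at hc
      exact hts (funext fun j => (hc j).symm)
    simp [hfac, dif_pos h]

lemma sum_map_finset_sum {α ι : Type*} (M : Multiset α) (s : Finset ι) (f : ι → α → ℝ) :
    (M.map (fun p => ∑ d ∈ s, f d p)).sum = ∑ d ∈ s, (M.map (f d)).sum := by
  induction M using Multiset.induction with
  | empty => simp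
  | cons a M ih => simp [ih, Finset.sum_add_distrib]

lemma count_as_sum {α : Type*} [DecidableEq α] (A : Multiset α) (s : α) :
    ((A.map fun p => if p = s then (1:ℝ) else 0)).sum = A.count s := by
  induction A using Multiset.induction with
  | empty => simp
  | cons a A ih =>
    by_cases hs : a = s <;> simp [Multiset.count_cons, ih, hs, eq_comm (a := s), add_comm]

open MvPolynomial in
lemma sum_eval_eq (n : ℕ) (A B : Multiset ((Fin n → ℝ) × (Fin n → ℝ)))
    (h : ∀ a b : Fin n → ℕ, (a, b) ≠ (0, 0) → qInv n a b A = qInv n a b B)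
    (P : MvPolynomial (Fin n ⊕ Fin n) ℝ) (hP : constantCoeff P = 0) :
    (A.map (fun p => eval (Sum.elim p.1 p.2) P)).sum
      = (B.map (fun p => eval (Sum.elim p.1 p.2) P)).sum := by
  have key : ∀ M : Multiset ((Fin n → ℝ) × (Fin n → ℝ)),
      (M.map (fun p => eval (Sum.elim p.1 p.2) P)).sum
        = ∑ d ∈ P.support, coeff d P *
            qInv n (fun j => d (Sum.inl j)) (fun j => d (Sum.inr j)) M := by
    intro M
    have hev : ∀ p : (Fin n → ℝ) × (Fin n → ℝ), eval (Sum.elim p.1 p.2) P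
        = ∑ d ∈ P.support, coeff d P *
            ∏ j, p.1 j ^ d (Sum.inl j) * p.2 j ^ d (Sum.inr j) := by
      intro p
      conv_lhs => rw [P.as_sum]
      rw [map_sum]
      refine Finset.sum_congr rfl fun d _ => ?_
      rw [eval_monomial]
      congr 1
      rw [Finsupp.prod_fintype _ _ (fun i => pow_zero _), Fintype.prod_sum_type,
        ← Finset.prod_mul_distrib]
      rfl
    simp only [hev, sum_map_finset_sum]
    refine Finset.sum_congr rfl fun d _ => ?_
    rw [qInv, ← Multiset.sum_map_mul_left]
  rw [key, key]
  refine Finset.sum_congr rfl fun d hd => ?_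
  have hd0 : d ≠ 0 := by
    rintro rfl
    rw [MvPolynomial.mem_support_iff] at hd
    exact hd hP
  have hab : ((fun j => d (Sum.inl j)), (fun j => d (Sum.inr j)))
      ≠ ((0 : Fin n → ℕ), (0 : Fin n → ℕ)) := by
    intro hc
    apply hd0
    ext i
    cases i with
    | inl j => exact congrFun (congrArg Prod.fst hc) j
    | inr j => exact congrFun (congrArg Prod.snd hc) j
  rw [h _ _ hab]

/-- If `q_{a,b}(A) = q_{a,b}(B)` for all `(a,b) ≠ (0,0)`, then `A` and `B`
agree after removing all copies of the zero pair. -/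
theorem stmt9 (n : ℕ) (hn : 1 ≤ n)
    (A B : Multiset ((Fin n → ℝ) × (Fin n → ℝ)))
    (h : ∀ a b : Fin n → ℕ, (a, b) ≠ (0, 0) → qInv n a b A = qInv n a b B) :
    A.filter (fun xy => xy ≠ 0) = B.filter (fun xy => xy ≠ 0) := by
  classical
  set ev : ((Fin n → ℝ) × (Fin n → ℝ)) → (Fin n ⊕ Fin n → ℝ) :=
    fun p => Sum.elim p.1 p.2 with hev
  have evinj : Function.Injective ev := by
    intro p q hpq
    have h1 : p.1 = q.1 := funext fun j => congrFun hpq (Sum.inl j)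
    have h2 : p.2 = q.2 := funext fun j => congrFun hpq (Sum.inr j)
    exact Prod.ext h1 h2
  have hev0 : ev 0 = 0 := by
    funext i; cases i <;> rfl
  have hcount : ∀ s : (Fin n → ℝ) × (Fin n → ℝ), s ≠ 0 → A.count s = B.count s := by
    intro s hs
    set T : Finset (Fin n ⊕ Fin n → ℝ) :=
      insert 0 ((A.toFinset ∪ B.toFinset).image ev) with hT
    obtain ⟨P, hP1, hP0⟩ := interp T (ev s)
    have hPc : MvPolynomial.constantCoeff P = 0 := by
      have h0T : (0 : Fin n ⊕ Fin n → ℝ) ∈ T := Finset.mem_insert_self _ _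
      have h0s : (0 : Fin n ⊕ Fin n → ℝ) ≠ ev s := by
        intro hc
        exact hs (evinj (hev0.trans hc)).symm
      have := hP0 0 h0T h0s
      rwa [← MvPolynomial.eval_zero]
    have hsum := sum_eval_eq n A B h P hPc
    have hrepl : ∀ M : Multiset ((Fin n → ℝ) × (Fin n → ℝ)),
        M.toFinset ⊆ A.toFinset ∪ B.toFinset →
        (M.map (fun p => MvPolynomial.eval (Sum.elim p.1 p.2) P)).sum = M.count s := by
      intro M hM
      rw [← count_as_sum M s]
      congr 1
      refine Multiset.map_congr rfl fun p hp => ?_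
      by_cases hps : p = s
      · subst hps
        simpa using hP1
      · have hpT : ev p ∈ T := by
          refine Finset.mem_insert_of_mem ?_
          exact Finset.mem_image_of_mem ev (hM (Multiset.mem_toFinset.mpr hp))
        have : ev p ≠ ev s := fun hc => hps (evinj hc)
        simpa [hps] using hP0 (ev p) hpT this
    have hA := hrepl A (Finset.subset_union_left)
    have hB := hrepl B (Finset.subset_union_right)
    have : (A.count s : ℝ) = B.count s := by rw [← hA, ← hB, hsum]
    exact_mod_cast this
  ext p
  by_cases hp : p = 0
  · subst hp
    simp [Multiset.count_filter]
  · simp [Multiset.count_filter, hp, hcount p hp]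
end

section
/- Let n ≥ 1 and let A, B, C, D be finite multisets of pairs (x, y) ∈ ℝ^n × ℝ^n. If q_{a,b}(A) − q_{a,b}(B) = q_{a,b}(C) − q_{a,b}(D) for every (a, b) ∈ ℕ^n × ℕ^n with (a, b) ≠ (0, 0), then the multisets obtained from A + D and from B + C (multiset sum) by removing all copies of the zero pair (0, 0) are equal. -/
open scoped Classical

namespace Stmt10Aux

open MvPolynomial

/-- pack a pair of vectors into a single vector indexed by `Fin n ⊕ Fin n`. -/
def fm (n : ℕ) (z : (Fin n → ℝ) × (Fin n → ℝ)) : Fin n ⊕ Fin n → ℝ :=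
  Sum.elim z.1 z.2

/-- moment functional of a multiset applied to a polynomial. -/
noncomputable def QQ (n : ℕ) (M : Multiset ((Fin n → ℝ) × (Fin n → ℝ)))
    (P : MvPolynomial (Fin n ⊕ Fin n) ℝ) : ℝ :=
  (M.map fun z => MvPolynomial.eval (fm n z) P).sum

noncomputable def QQl (n : ℕ) (M : Multiset ((Fin n → ℝ) × (Fin n → ℝ))) :
    MvPolynomial (Fin n ⊕ Fin n) ℝ →ₗ[ℝ] ℝ where
  toFun := QQ n M
  map_add' P Q := by
    simp only [QQ, map_add]
    rw [← Multiset.sum_map_add]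
  map_smul' c P := by
    simp only [QQ, RingHom.id_apply, MvPolynomial.smul_eq_C_mul, map_mul, eval_C,
      smul_eq_mul]
    rw [← Multiset.sum_map_mul_left]

lemma QQl_apply (n : ℕ) (M : Multiset ((Fin n → ℝ) × (Fin n → ℝ)))
    (P : MvPolynomial (Fin n ⊕ Fin n) ℝ) : QQl n M P = QQ n M P := rfl

lemma QQ_monomial (n : ℕ) (M : Multiset ((Fin n → ℝ) × (Fin n → ℝ)))
    (e : (Fin n ⊕ Fin n) →₀ ℕ) :
    QQ n M (monomial e 1) =
      qInv n (fun j => e (Sum.inl j)) (fun j => e (Sum.inr j)) M := by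
  unfold QQ qInv
  congr 1
  apply Multiset.map_congr rfl
  intro z _
  rw [eval_monomial, one_mul, Finsupp.prod_pow, Fintype.prod_sum_type,
    ← Finset.prod_mul_distrib]
  rfl

lemma fm_zero (n : ℕ) : fm n (0 : (Fin n → ℝ) × (Fin n → ℝ)) = 0 := by
  funext s
  cases s <;> rfl

lemma exists_ne (n : ℕ) {p w : (Fin n → ℝ) × (Fin n → ℝ)} (h : w ≠ p) :
    ∃ s, fm n p s ≠ fm n w s := by
  by_contra hc
  push_neg at hc
  apply h
  ext j
  · exact (hc (Sum.inl j)).symm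
  · exact (hc (Sum.inr j)).symm

/-- separating polynomial: value 1 at `p`, value 0 at `w` (when `w ≠ p`). -/
noncomputable def sep (n : ℕ) (p w : (Fin n → ℝ) × (Fin n → ℝ)) :
    MvPolynomial (Fin n ⊕ Fin n) ℝ :=
  if h : ∃ s, fm n p s ≠ fm n w s then
    C (fm n p h.choose - fm n w h.choose)⁻¹ * (X h.choose - C (fm n w h.choose))
  else 1

lemma sep_eval_self (n : ℕ) {p w : (Fin n → ℝ) × (Fin n → ℝ)} (h : w ≠ p) :
    eval (fm n p) (sep n p w) = 1 := by
  have hex := exists_ne n h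
  rw [sep, dif_pos hex]
  simp only [map_mul, eval_C, map_sub, eval_X]
  exact inv_mul_cancel₀ (sub_ne_zero.mpr hex.choose_spec)

lemma sep_eval_other (n : ℕ) {p w : (Fin n → ℝ) × (Fin n → ℝ)} (h : w ≠ p) :
    eval (fm n w) (sep n p w) = 0 := by
  have hex := exists_ne n h
  rw [sep, dif_pos hex]
  simp

lemma sum_map_ite {α : Type*} [DecidableEq α] (M : Multiset α) (p : α) :
    (M.map fun z => if z = p then (1 : ℝ) else 0).sum = M.count p := by
  induction M using Multiset.induction_on with
  | empty => simp
  | cons a s ih =>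
    rw [Multiset.map_cons, Multiset.sum_cons, ih, Multiset.count_cons]
    by_cases ha : a = p
    · simp [ha, add_comm]
    · simp only [ha, if_false, Multiset.count_cons, if_neg (fun h : p = a => ha h.symm),
        add_zero, zero_add, ih]

end Stmt10Aux

/-- If `q_{a,b}(A) - q_{a,b}(B) = q_{a,b}(C) - q_{a,b}(D)` for all
`(a,b) ≠ (0,0)`, then `A + D` and `B + C` agree after removing all copies of the zero
pair. -/
theorem stmt10 (n : ℕ) (hn : 1 ≤ n)
    (A B C D : Multiset ((Fin n → ℝ) × (Fin n → ℝ)))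
    (h : ∀ a b : Fin n → ℕ, (a, b) ≠ (0, 0) →
      qInv n a b A - qInv n a b B = qInv n a b C - qInv n a b D) :
    (A + D).filter (fun xy => xy ≠ 0) = (B + C).filter (fun xy => xy ≠ 0) := by
  have hmono : ∀ e : (Fin n ⊕ Fin n) →₀ ℕ, e ≠ 0 →
      Stmt10Aux.QQ n A (MvPolynomial.monomial e 1)
        - Stmt10Aux.QQ n B (MvPolynomial.monomial e 1)
        = Stmt10Aux.QQ n C (MvPolynomial.monomial e 1)
          - Stmt10Aux.QQ n D (MvPolynomial.monomial e 1) := by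
    intro e he
    rw [Stmt10Aux.QQ_monomial, Stmt10Aux.QQ_monomial, Stmt10Aux.QQ_monomial,
      Stmt10Aux.QQ_monomial]
    apply h
    intro hab
    apply he
    ext s
    cases s with
    | inl j => exact congrFun (congrArg Prod.fst hab) j
    | inr j => exact congrFun (congrArg Prod.snd hab) j
  have key : ∀ P : MvPolynomial (Fin n ⊕ Fin n) ℝ, MvPolynomial.constantCoeff P = 0 →
      Stmt10Aux.QQ n A P - Stmt10Aux.QQ n B P
        = Stmt10Aux.QQ n C P - Stmt10Aux.QQ n D P := by
    intro P hP
    set g : MvPolynomial (Fin n ⊕ Fin n) ℝ →ₗ[ℝ] ℝ :=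
      Stmt10Aux.QQl n A - Stmt10Aux.QQl n B - Stmt10Aux.QQl n C + Stmt10Aux.QQl n D with hg
    have hgP : g P = 0 := by
      conv_lhs => rw [MvPolynomial.as_sum P]
      rw [map_sum]
      apply Finset.sum_eq_zero
      intro e he
      have he0 : e ≠ 0 := by
        rintro rfl
        exact MvPolynomial.mem_support_iff.mp he
          (by simpa [MvPolynomial.constantCoeff_eq] using hP)
      have hsm : (MvPolynomial.monomial e) (MvPolynomial.coeff e P)
          = MvPolynomial.coeff e P • (MvPolynomial.monomial e) (1 : ℝ) := by
        rw [MvPolynomial.smul_monomial, smul_eq_mul, mul_one]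
      rw [hsm, map_smul, smul_eq_mul]
      have hm := hmono e he0
      simp only [hg, LinearMap.add_apply, LinearMap.sub_apply, Stmt10Aux.QQl_apply]
      have hx : Stmt10Aux.QQ n A ((MvPolynomial.monomial e) 1)
          - Stmt10Aux.QQ n B ((MvPolynomial.monomial e) 1)
          - Stmt10Aux.QQ n C ((MvPolynomial.monomial e) 1)
          + Stmt10Aux.QQ n D ((MvPolynomial.monomial e) 1) = 0 := by linarith
      rw [hx, mul_zero]
    simp only [hg, LinearMap.add_apply, LinearMap.sub_apply, Stmt10Aux.QQl_apply] at hgP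
    linarith
  have hfm0 := Stmt10Aux.fm_zero n
  set S : Finset ((Fin n → ℝ) × (Fin n → ℝ)) := insert 0 (A + D + B + C).toFinset with hS
  suffices hcnt : ∀ p : (Fin n → ℝ) × (Fin n → ℝ), p ≠ 0 →
      ((A + D).filter (fun xy => xy ≠ 0)).count p
        = ((B + C).filter (fun xy => xy ≠ 0)).count p by
    ext p
    by_cases hp : p = 0
    · subst hp
      rw [Multiset.count_filter, Multiset.count_filter]
      simp
    · exact hcnt p hp
  intro p hp
  set T := S.erase p with hT
  set P := ∏ w ∈ T, Stmt10Aux.sep n p w with hPdef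
  have hPp : MvPolynomial.eval (Stmt10Aux.fm n p) P = 1 := by
    rw [hPdef, map_prod]
    exact Finset.prod_eq_one fun w hw => Stmt10Aux.sep_eval_self n (Finset.ne_of_mem_erase hw)
  have hPT : ∀ z ∈ T, MvPolynomial.eval (Stmt10Aux.fm n z) P = 0 := by
    intro z hz
    rw [hPdef, map_prod]
    exact Finset.prod_eq_zero hz (Stmt10Aux.sep_eval_other n (Finset.ne_of_mem_erase hz))
  have h0T : (0 : (Fin n → ℝ) × (Fin n → ℝ)) ∈ T :=
    Finset.mem_erase.mpr ⟨fun h0 => hp h0.symm, Finset.mem_insert_self _ _⟩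
  have hP00 : MvPolynomial.eval (Stmt10Aux.fm n (0 : (Fin n → ℝ) × (Fin n → ℝ))) P = 0 :=
    hPT 0 h0T
  have hP0 : MvPolynomial.constantCoeff P = 0 := by
    rw [← MvPolynomial.eval_zero, ← hfm0]
    exact hP00
  have hkey := key P hP0
  have hQsum : ∀ M N : Multiset ((Fin n → ℝ) × (Fin n → ℝ)),
      Stmt10Aux.QQ n (M + N) P = Stmt10Aux.QQ n M P + Stmt10Aux.QQ n N P := by
    intro M N
    unfold Stmt10Aux.QQ
    rw [Multiset.map_add, Multiset.sum_add]
  have hAD : Stmt10Aux.QQ n (A + D) P = Stmt10Aux.QQ n (B + C) P := by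
    rw [hQsum, hQsum]; linarith
  have hfilter : ∀ M : Multiset ((Fin n → ℝ) × (Fin n → ℝ)),
      Stmt10Aux.QQ n (M.filter (fun xy => xy ≠ 0)) P = Stmt10Aux.QQ n M P := by
    intro M
    conv_rhs => rw [← Multiset.filter_add_not (fun xy => xy ≠ 0) M]
    rw [hQsum]
    have hz : ∀ z ∈ M.filter (fun xy => ¬ xy ≠ 0),
        MvPolynomial.eval (Stmt10Aux.fm n z) P = 0 := by
      intro z hzm
      have hz0 : z = 0 := not_not.mp (Multiset.mem_filter.mp hzm).2
      rw [hz0]; exact hP00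
    have hzero : Stmt10Aux.QQ n (M.filter (fun xy => ¬ xy ≠ 0)) P = 0 := by
      unfold Stmt10Aux.QQ
      rw [Multiset.map_congr rfl hz]
      simp
    rw [hzero, add_zero]
  have hcount : ∀ M : Multiset ((Fin n → ℝ) × (Fin n → ℝ)),
      (∀ z ∈ M, z ∈ (A + D + B + C)) →
      Stmt10Aux.QQ n (M.filter (fun xy => xy ≠ 0)) P
        = (M.filter (fun xy => xy ≠ 0)).count p := by
    intro M hM
    have hind : ∀ z ∈ M.filter (fun xy => xy ≠ 0),
        MvPolynomial.eval (Stmt10Aux.fm n z) P = if z = p then (1 : ℝ) else 0 := by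
      intro z hzm
      have hzM : z ∈ M := Multiset.mem_of_mem_filter hzm
      have hzS : z ∈ S := Finset.mem_insert_of_mem (Multiset.mem_toFinset.mpr (hM z hzM))
      by_cases hzp : z = p
      · rw [if_pos hzp, hzp]; exact hPp
      · rw [if_neg hzp]
        exact hPT z (Finset.mem_erase.mpr ⟨hzp, hzS⟩)
    unfold Stmt10Aux.QQ
    rw [Multiset.map_congr rfl hind]
    exact Stmt10Aux.sum_map_ite _ p
  have hA := hcount (A + D) (fun z hz => by
    simp only [Multiset.mem_add] at hz ⊢; tauto)
  have hB := hcount (B + C) (fun z hz => by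
    simp only [Multiset.mem_add] at hz ⊢; tauto)
  rw [hfilter] at hA hB
  have : (((A + D).filter (fun xy => xy ≠ 0)).count p : ℝ)
      = (((B + C).filter (fun xy => xy ≠ 0)).count p : ℝ) := by
    rw [← hA, ← hB]; exact hAD
  exact_mod_cast this
end

section
/- Let n ≥ 1. The map X ↦ ρ(X) from the free abelian group ℤ[J(n)] to the set of functions ℤ^n × ℤ^n → ℤ is injective. -/
open scoped Classical

/-- `J(n) = {(x, y) ∈ ℤ^n × ℤ^n : x ≤ y componentwise}`. -/
def Jn (n : ℕ) := {xy : (Fin n → ℤ) × (Fin n → ℤ) // ∀ j, xy.1 j ≤ xy.2 j}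

/-- The generalized rank invariant associated to an element `X` of the free abelian group
`ℤ[J(n)]`: `ρ(X)(u, v) = Σ_{(x,y)} X(x,y) · [x ≤ u ∧ u ≤ v ∧ v ≤ y]`. -/
noncomputable def rho (n : ℕ) (X : Jn n →₀ ℤ) (u v : Fin n → ℤ) : ℤ :=
  X.sum (fun xy c => c *
    (if (∀ j, xy.1.1 j ≤ u j) ∧ (∀ j, u j ≤ v j) ∧ (∀ j, v j ≤ xy.1.2 j) then 1 else 0))

lemma rho_ne_zero_of_ne_zero (n : ℕ) (Z : Jn n →₀ ℤ) (hZ : Z ≠ 0) :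
    ∃ u v, rho n Z u v ≠ 0 := by
  have hsupp : Z.support.Nonempty := Finsupp.support_nonempty_iff.mpr hZ
  obtain ⟨p, hp, hmax⟩ := Z.support.exists_max_image
    (fun xy => ∑ j, (xy.1.2 j - xy.1.1 j)) hsupp
  refine ⟨p.1.1, p.1.2, ?_⟩
  have : rho n Z p.1.1 p.1.2 = Z p := by
    rw [rho, Finsupp.sum, Finset.sum_eq_single p]
    · have hcond : (∀ j, p.1.1 j ≤ p.1.1 j) ∧ (∀ j, p.1.1 j ≤ p.1.2 j) ∧
          (∀ j, p.1.2 j ≤ p.1.2 j) := ⟨fun j => le_refl _, p.2, fun j => le_refl _⟩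
      rw [if_pos hcond, mul_one]
    · intro q hq hqp
      rw [if_neg, mul_zero]
      rintro ⟨h1, _, h3⟩
      apply hqp
      -- q.1.1 ≤ p.1.1 and p.1.2 ≤ q.1.2, so the intervals nest; use maximality of the sum
      have hle : ∀ j ∈ Finset.univ, (p.1.2 j - p.1.1 j) ≤ (q.1.2 j - q.1.1 j) := by
        intro j _
        have := h1 j
        have := h3 j
        omega
      have hsum : ∑ j, (q.1.2 j - q.1.1 j) ≤ ∑ j, (p.1.2 j - p.1.1 j) := hmax q hq
      have hsum2 : ∑ j, (p.1.2 j - p.1.1 j) ≤ ∑ j, (q.1.2 j - q.1.1 j) :=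
        Finset.sum_le_sum hle
      have heq : ∑ j, (p.1.2 j - p.1.1 j) = ∑ j, (q.1.2 j - q.1.1 j) :=
        le_antisymm hsum2 hsum
      have hterm : ∀ j ∈ Finset.univ, (p.1.2 j - p.1.1 j) = (q.1.2 j - q.1.1 j) :=
        (Finset.sum_eq_sum_iff_of_le hle).mp heq
      apply Subtype.ext
      apply Prod.ext <;> funext j <;>
        · have h := hterm j (Finset.mem_univ j)
          have := h1 j
          have := h3 j
          omega
    · intro hp'
      rw [Finsupp.notMem_support_iff.mp hp']
      ring
  rw [this]
  exact Finsupp.mem_support_iff.mp hp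

/-- The map `X ↦ ρ(X)` from `ℤ[J(n)]` to functions `ℤ^n × ℤ^n → ℤ` is
injective. -/
theorem stmt13 (n : ℕ) (hn : 1 ≤ n) :
    Function.Injective (fun X : Jn n →₀ ℤ => rho n X) := by
  intro X Y hXY
  by_contra hne
  have hZ : X - Y ≠ 0 := sub_ne_zero.mpr hne
  obtain ⟨u, v, hr⟩ := rho_ne_zero_of_ne_zero n (X - Y) hZ
  apply hr
  have hsub : rho n (X - Y) u v = rho n X u v - rho n Y u v := by
    unfold rho
    rw [Finsupp.sum_sub_index]
    intro a b₁ b₂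
    ring
  have heq : rho n X u v = rho n Y u v := by
    have := congrFun (congrFun hXY u) v
    simpa using this
  rw [hsub, heq, sub_self]
end

section
/- Let n ≥ 1. Every generalized rank invariant ρ : ℤ^n × ℤ^n → ℤ equals ρ(X) for some X in the free abelian group ℤ[J(n)]. -/
open scoped Classical

section core

variable {ι : Type*} [Fintype ι] [DecidableEq ι]

/-- indicator vector of a finite set of coordinates -/
def indC (S : Finset ι) : ι → ℤ := fun j => if j ∈ S then 1 else 0

lemma indC_nonneg (S : Finset ι) (j : ι) : 0 ≤ indC S j := by
  unfold indC; split <;> omega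

lemma indC_le_one (S : Finset ι) (j : ι) : indC S j ≤ 1 := by
  unfold indC; split <;> omega

/-- the difference operator -/
noncomputable def Dop (g : (ι → ℤ) → ℤ) (p : ι → ℤ) : ℤ :=
  ∑ S ∈ Finset.univ.powerset, (-1 : ℤ) ^ S.card * g (p - indC S)

lemma Dop_support {g : (ι → ℤ) → ℤ} {A B : ι → ℤ}
    (hg : ∀ w, g w ≠ 0 → A ≤ w ∧ w ≤ B) {p : ι → ℤ} (hp : Dop g p ≠ 0) :
    A ≤ p ∧ p ≤ B + 1 := by
  by_contra h
  apply hp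
  apply Finset.sum_eq_zero
  intro S _
  have hz : g (p - indC S) = 0 := by
    by_contra hg0
    obtain ⟨hA, hB⟩ := hg _ hg0
    apply h
    rw [Pi.le_def] at hA hB
    simp only [Pi.sub_apply] at hA hB
    constructor
    · rw [Pi.le_def]
      intro j
      have hA1 := hA j
      have hA2 := indC_nonneg S j
      omega
    · rw [Pi.le_def]
      intro j
      have hB1 := hB j
      have hB2 := indC_le_one S j
      simp only [Pi.add_apply, Pi.one_apply]
      omega
  rw [hz, mul_zero]

lemma sum_sign_ind (w q : ι → ℤ) :
    ∑ S ∈ Finset.univ.powerset, (-1 : ℤ) ^ S.card * (if w + indC S ≤ q then 1 else 0)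
      = if w = q then 1 else 0 := by
  by_cases hwq : w ≤ q
  · have key : ∀ S : Finset ι, (w + indC S ≤ q) ↔ S ⊆ Finset.univ.filter (fun j => w j < q j) := by
      intro S
      rw [Pi.le_def]
      rw [Pi.le_def] at hwq
      constructor
      · intro hS j hj
        simp only [Finset.mem_filter, Finset.mem_univ, true_and]
        have h5 := hS j
        simp only [Pi.add_apply, indC, if_pos hj] at h5
        omega
      · intro hS j
        simp only [Pi.add_apply, indC]
        split
        · next hj =>
          have h5 := hS hj
          simp only [Finset.mem_filter] at h5
          omega
        · have := hwq j; omega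
    have step : ∀ S ∈ Finset.univ.powerset,
        (-1 : ℤ) ^ S.card * (if w + indC S ≤ q then 1 else 0)
          = (if S ⊆ Finset.univ.filter (fun j => w j < q j) then (-1 : ℤ) ^ S.card else 0) := by
      intro S _
      rw [key S]
      split <;> simp
    rw [Finset.sum_congr rfl step, ← Finset.sum_filter]
    have hfil : (Finset.univ.powerset.filter
        (fun S => S ⊆ Finset.univ.filter (fun j => w j < q j)))
        = (Finset.univ.filter (fun j => w j < q j)).powerset := by
      ext S
      simp [Finset.mem_powerset]
    rw [hfil, Finset.sum_powerset_neg_one_pow_card]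
    congr 1
    rw [eq_iff_iff]
    constructor
    · intro he
      funext j
      have : j ∉ Finset.univ.filter (fun j => w j < q j) := by rw [he]; simp
      simp only [Finset.mem_filter, Finset.mem_univ, true_and, not_lt] at this
      exact le_antisymm (hwq j) this
    · rintro rfl
      ext j
      simp
  · rw [if_neg (by rintro rfl; exact hwq le_rfl)]
    apply Finset.sum_eq_zero
    intro S _
    rw [if_neg, mul_zero]
    intro hS
    apply hwq
    rw [Pi.le_def] at hS ⊢
    simp only [Pi.add_apply] at hS
    intro j
    have h5 := hS j
    have h6 := indC_nonneg S j
    omega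

end core

section core2
variable {ι : Type*} [Fintype ι] [DecidableEq ι]

lemma sum_eq_of_support {α : Type*} (g : α → ℤ) (U V : Finset α)
    (h : ∀ w, g w ≠ 0 → (w ∈ U ↔ w ∈ V)) :
    ∑ w ∈ U, g w = ∑ w ∈ V, g w := by
  rw [← Finset.sum_filter_ne_zero U, ← Finset.sum_filter_ne_zero V]
  congr 1
  ext w
  simp only [Finset.mem_filter]
  constructor
  · rintro ⟨hw, hg0⟩; exact ⟨(h w hg0).1 hw, hg0⟩
  · rintro ⟨hw, hg0⟩; exact ⟨(h w hg0).2 hw, hg0⟩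

lemma Dop_inv (g : (ι → ℤ) → ℤ) (A B : ι → ℤ)
    (hg : ∀ w, g w ≠ 0 → A ≤ w ∧ w ≤ B) (q : ι → ℤ) :
    ∑ p ∈ (Finset.Icc A (B + 1)).filter (fun p => p ≤ q), Dop g p = g q := by
  unfold Dop
  rw [Finset.sum_comm]
  have step : ∀ S ∈ Finset.univ.powerset,
      ∑ p ∈ (Finset.Icc A (B + 1)).filter (fun p => p ≤ q), (-1 : ℤ) ^ S.card * g (p - indC S)
        = ∑ w ∈ Finset.Icc A B, (-1 : ℤ) ^ S.card * (if w + indC S ≤ q then g w else 0) := by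
    intro S _
    rw [← Finset.mul_sum, ← Finset.mul_sum]
    congr 1
    rw [← Finset.sum_filter]
    set T := (Finset.Icc A (B + 1)).filter (fun p => p ≤ q) with hT
    have himg : ∑ p ∈ T, g (p - indC S) = ∑ w ∈ T.image (fun p => p - indC S), g w := by
      rw [Finset.sum_image]
      intro a _ b _ hab
      have := congrArg (fun z => z + indC S) hab
      simpa using this
    rw [himg]
    apply sum_eq_of_support
    intro w hg0
    obtain ⟨hA, hB⟩ := hg w hg0
    rw [Pi.le_def] at hA hB
    constructor
    · intro hw
      simp only [Finset.mem_image, hT, Finset.mem_filter, Finset.mem_Icc] at hw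
      obtain ⟨p, ⟨⟨hpA, hpB⟩, hpq⟩, hpw⟩ := hw
      simp only [Finset.mem_filter, Finset.mem_Icc]
      refine ⟨⟨hA, hB⟩, ?_⟩
      rw [Pi.le_def] at hpq ⊢
      intro j
      have h5 := hpq j
      have h6 : w j = p j - indC S j := by
        rw [← hpw]; simp
      have h7 := indC_le_one S j
      have h8 := indC_nonneg S j
      simp only [Pi.add_apply]
      omega
    · intro hw
      simp only [Finset.mem_filter, Finset.mem_Icc] at hw
      obtain ⟨⟨-, -⟩, hwq⟩ := hw
      simp only [Finset.mem_image, hT, Finset.mem_filter, Finset.mem_Icc]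
      refine ⟨w + indC S, ⟨⟨?_, ?_⟩, hwq⟩, by simp⟩
      · rw [Pi.le_def]
        intro j
        have h5 := hA j
        have h6 := indC_nonneg S j
        simp only [Pi.add_apply]
        omega
      · rw [Pi.le_def]
        intro j
        have h5 := hB j
        have h6 := indC_le_one S j
        simp only [Pi.add_apply, Pi.one_apply]
        omega
  rw [Finset.sum_congr rfl step, Finset.sum_comm]
  have inner : ∀ w ∈ Finset.Icc A B,
      ∑ S ∈ Finset.univ.powerset, (-1 : ℤ) ^ S.card * (if w + indC S ≤ q then g w else 0)
        = g w * (if w = q then 1 else 0) := by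
    intro w _
    rw [← sum_sign_ind w q, Finset.mul_sum]
    apply Finset.sum_congr rfl
    intro S _
    split <;> ring
  rw [Finset.sum_congr rfl inner]
  simp only [mul_ite, mul_one, mul_zero]
  rw [Finset.sum_ite_eq' (Finset.Icc A B) q g]
  split
  · rfl
  · next hq =>
    by_contra hg0
    obtain ⟨hA, hB⟩ := hg q (fun h => hg0 h.symm)
    exact hq (Finset.mem_Icc.mpr ⟨hA, hB⟩)

end core2

/-- Every generalized rank invariant `r : ℤ^n × ℤ^n → ℤ` (i.e. `r u v = 0`
unless `u ≤ v`, and `r u v = 0` outside some window `u₀ ≤ u`, `v ≤ v₀`) equals `ρ(X)` for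
some `X ∈ ℤ[J(n)]`. -/
theorem stmt14 (n : ℕ) (hn : 1 ≤ n) (r : (Fin n → ℤ) → (Fin n → ℤ) → ℤ)
    (h1 : ∀ u v, ¬(∀ j, u j ≤ v j) → r u v = 0)
    (h2 : ∃ u₀ v₀ : Fin n → ℤ, ∀ u v,
      ¬((∀ j, u₀ j ≤ u j) ∧ (∀ j, v j ≤ v₀ j)) → r u v = 0) :
    ∃ X : Jn n →₀ ℤ, rho n X = r := by
  classical
  obtain ⟨u₀, v₀, h2⟩ := h2
  set g : ((Fin n ⊕ Fin n) → ℤ) → ℤ :=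
    fun p => r (fun j => p (Sum.inl j)) (fun j => -p (Sum.inr j)) with hgdef
  set A : (Fin n ⊕ Fin n) → ℤ := Sum.elim u₀ (fun j => -v₀ j) with hAdef
  set B : (Fin n ⊕ Fin n) → ℤ := Sum.elim v₀ (fun j => -u₀ j) with hBdef
  have hg : ∀ w, g w ≠ 0 → A ≤ w ∧ w ≤ B := by
    intro w hw
    have huv : ∀ j, w (Sum.inl j) ≤ -w (Sum.inr j) := by
      by_contra hc
      exact hw (h1 _ _ hc)
    have hwin : (∀ j, u₀ j ≤ w (Sum.inl j)) ∧ (∀ j, -w (Sum.inr j) ≤ v₀ j) := by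
      by_contra hc
      exact hw (h2 _ _ hc)
    constructor
    · rw [Pi.le_def]
      rintro (j | j)
      · simpa [hAdef] using hwin.1 j
      · have := hwin.2 j
        simp only [hAdef, Sum.elim_inr]
        omega
    · rw [Pi.le_def]
      rintro (j | j)
      · have h5 := huv j
        have h6 := hwin.2 j
        simp only [hBdef, Sum.elim_inl]
        omega
      · have h5 := huv j
        have h6 := hwin.1 j
        simp only [hBdef, Sum.elim_inr]
        omega
  set box : Finset ((Fin n → ℤ) × (Fin n → ℤ)) :=
    Finset.Icc (u₀, fun j => u₀ j - 1) ((fun j => v₀ j + 1), v₀) with hboxdef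
  set enc : ((Fin n → ℤ) × (Fin n → ℤ)) → (Fin n ⊕ Fin n) → ℤ :=
    fun z => Sum.elim z.1 (fun j => -z.2 j) with hencdef
  have hbox : ∀ z : ((Fin n → ℤ) × (Fin n → ℤ)),
      z ∈ box ↔ (A ≤ enc z ∧ enc z ≤ B + 1) := by
    intro z
    simp only [hboxdef, Finset.mem_Icc, Prod.le_def, Pi.le_def]
    constructor
    · rintro ⟨⟨h1a, h1b⟩, ⟨h2a, h2b⟩⟩
      constructor
      · rintro (j | j)
        · simpa [hAdef, hencdef] using h1a j
        · have := h2b j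
          simp only [hAdef, hencdef, Sum.elim_inr]
          omega
      · rintro (j | j)
        · have := h2a j
          simp only [hBdef, hencdef, Sum.elim_inl, Pi.add_apply, Pi.one_apply]
          omega
        · have := h1b j
          simp only [hBdef, hencdef, Sum.elim_inr, Pi.add_apply, Pi.one_apply]
          omega
    · rintro ⟨hA', hB'⟩
      refine ⟨⟨fun j => ?_, fun j => ?_⟩, ⟨fun j => ?_, fun j => ?_⟩⟩
      · simpa [hAdef, hencdef] using hA' (Sum.inl j)
      · have := hB' (Sum.inr j)
        simp only [hBdef, hencdef, Sum.elim_inr, Pi.add_apply, Pi.one_apply] at this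
        omega
      · have := hB' (Sum.inl j)
        simp only [hBdef, hencdef, Sum.elim_inl, Pi.add_apply, Pi.one_apply] at this
        omega
      · have := hA' (Sum.inr j)
        simp only [hAdef, hencdef, Sum.elim_inr] at this
        omega
  set P : ((Fin n → ℤ) × (Fin n → ℤ)) → Prop := fun xy => ∀ j, xy.1 j ≤ xy.2 j with hPdef
  set s : Finset (Jn n) := box.subtype P with hsdef
  have hXs : ∀ p : Jn n, Dop g (enc p.1) ≠ 0 → p ∈ s := by
    intro p hp
    rw [hsdef]; apply Finset.mem_subtype.mpr
    exact (hbox p.1).2 (Dop_support hg hp)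
  refine ⟨Finsupp.onFinset s (fun p => Dop g (enc p.1)) hXs, ?_⟩
  funext u v
  unfold rho
  rw [Finsupp.sum_of_support_subset _ Finsupp.support_onFinset_subset _
    (by intro i hi; exact zero_mul _)]
  simp only [Finsupp.onFinset_apply]
  by_cases huv : ∀ j, u j ≤ v j
  · have keyq := Dop_inv g A B hg (Sum.elim u (fun j => -v j))
    have hgq : g (Sum.elim u (fun j => -v j)) = r u v := by
      simp only [hgdef, Sum.elim_inl, Sum.elim_inr, neg_neg]
    have hsub : (∑ p ∈ s, Dop g (enc p.1) *
          (if (∀ j, p.1.1 j ≤ u j) ∧ (∀ j, u j ≤ v j) ∧ (∀ j, v j ≤ p.1.2 j)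
            then (1 : ℤ) else 0))
        = ∑ z ∈ box.filter P, Dop g (enc z) *
          (if (∀ j, z.1 j ≤ u j) ∧ (∀ j, u j ≤ v j) ∧ (∀ j, v j ≤ z.2 j)
            then (1 : ℤ) else 0) := by
      apply Finset.sum_bij (fun (p : Jn n) _ => p.1)
      · intro p hp
        rw [hsdef] at hp; replace hp := Finset.mem_subtype.mp hp
        exact Finset.mem_filter.mpr ⟨hp, p.2⟩
      · intro a ha b hb hab
        exact Subtype.ext hab
      · intro z hz
        rw [Finset.mem_filter] at hz
        exact ⟨⟨z, hz.2⟩, by rw [hsdef]; exact Finset.mem_subtype.mpr hz.1, rfl⟩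
      · intro p hp
        rfl
    have main2 : (∑ z ∈ box.filter P, Dop g (enc z) *
          (if (∀ j, z.1 j ≤ u j) ∧ (∀ j, u j ≤ v j) ∧ (∀ j, v j ≤ z.2 j)
            then (1 : ℤ) else 0))
        = ∑ p' ∈ (Finset.Icc A (B + 1)).filter
            (fun p' => p' ≤ Sum.elim u (fun j => -v j)), Dop g p' := by
      simp only [mul_ite, mul_one, mul_zero]
      rw [← Finset.sum_filter]
      have hff : (box.filter P).filter
          (fun z => (∀ j, z.1 j ≤ u j) ∧ (∀ j, u j ≤ v j) ∧ (∀ j, v j ≤ z.2 j))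
          = box.filter
          (fun z => (∀ j, z.1 j ≤ u j) ∧ (∀ j, u j ≤ v j) ∧ (∀ j, v j ≤ z.2 j)) := by
        rw [Finset.filter_filter]
        apply Finset.filter_congr
        intro z _
        simp only [hPdef, eq_iff_iff]
        constructor
        · rintro ⟨-, hc⟩; exact hc
        · rintro ⟨hc1, hc2, hc3⟩
          exact ⟨fun j => le_trans (hc1 j) (le_trans (hc2 j) (hc3 j)), hc1, hc2, hc3⟩
      rw [hff]
      apply Finset.sum_nbij' enc
        (fun p' => ((fun j => p' (Sum.inl j)), fun j => -p' (Sum.inr j)))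
      · intro z hz
        simp only [Finset.mem_filter] at hz ⊢
        obtain ⟨hzbox, hc1, -, hc3⟩ := hz
        obtain ⟨hA', hB'⟩ := (hbox z).1 hzbox
        refine ⟨Finset.mem_Icc.mpr ⟨hA', hB'⟩, ?_⟩
        rw [Pi.le_def]
        rintro (j | j)
        · simpa [hencdef] using hc1 j
        · have := hc3 j
          simp only [hencdef, Sum.elim_inr]
          omega
      · intro p' hp'
        simp only [Finset.mem_filter, Finset.mem_Icc] at hp'
        obtain ⟨⟨hA', hB'⟩, hq⟩ := hp'
        rw [Pi.le_def] at hq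
        have hed : enc ((fun j => p' (Sum.inl j)), fun j => -p' (Sum.inr j)) = p' := by
          funext i
          cases i <;> simp [hencdef]
        simp only [Finset.mem_filter]
        refine ⟨(hbox _).2 (by rw [hed]; exact ⟨hA', hB'⟩), ?_, huv, ?_⟩
        · intro j
          simpa using hq (Sum.inl j)
        · intro j
          have := hq (Sum.inr j)
          simp only [Sum.elim_inr] at this
          omega
      · intro z _
        ext j
        · simp [hencdef]
        · simp [hencdef]
      · intro p' _
        funext i
        cases i <;> simp [hencdef]
      · intro z _
        rfl
    exact hsub.trans (main2.trans (keyq.trans hgq))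
  · rw [h1 u v huv]
    apply Finset.sum_eq_zero
    intro p _
    rw [if_neg, mul_zero]
    rintro ⟨-, h5, -⟩
    exact huv h5
end
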